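/- Let n = 2^r p, where p is an odd prime and r ≥ 2, and let S be a U(n)-extremal sequence for the Gao constant. Call a term x of S an odd multiple of 2^i if x = 2^i·u in Z_n for some odd integer u. Then exactly one of the following holds: (i) for each i with 0 ≤ i ≤ r − 2, an odd multiple of 2^i occurs exactly once as a term of S; or (ii) there is a unique j with 0 ≤ j ≤ r − 2 such that odd multiples of 2^j occur exactly two times as terms of S, and for every i ≠ j with 0 ≤ i ≤ r − 2, an odd multiple of 2^i occurs exactly once as a term of S. -/

import Mathlib

open Classical in
/-- The number of terms of the sequence `S` satisfying the predicate `P`. -/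
noncomputable def pcount {α : Type*} (P : α → Prop) (S : List α) : ℕ :=
  S.countP fun x => decide (P x)

/-- `S` is an `A`-weighted zero-sum sequence in `ZMod n`: there are weights
`a i ∈ A` with `∑ a i * x i = 0`. -/
def IsWZSum {n : ℕ} (A : Set (ZMod n)) (S : List (ZMod n)) : Prop :=
  ∃ w : List (ZMod n), w.length = S.length ∧ (∀ a ∈ w, a ∈ A) ∧
    (List.zipWith (· * ·) w S).sum = 0

/-- `S` has an `A`-weighted zero-sum subsequence of length `t ≥ 1`. -/
def HasWZSS {n : ℕ} (A : Set (ZMod n)) (S : List (ZMod n)) (t : ℕ) : Prop :=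
  0 < t ∧ ∃ T : List (ZMod n), T.Sublist S ∧ T.length = t ∧ IsWZSum A T

/-- `S` has a nonempty `A`-weighted zero-sum subsequence. -/
def HasWZS {n : ℕ} (A : Set (ZMod n)) (S : List (ZMod n)) : Prop :=
  ∃ T : List (ZMod n), T.Sublist S ∧ T ≠ [] ∧ IsWZSum A T

/-- The `A`-weighted Davenport constant `D_A(n)`: the least `k > 0` such that every
sequence of length `k` in `ZMod n` has a nonempty `A`-weighted zero-sum subsequence. -/
noncomputable def DavC (n : ℕ) (A : Set (ZMod n)) : ℕ :=
  sInf {k | 0 < k ∧ ∀ S : List (ZMod n), S.length = k → HasWZS A S}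

/-- The `A`-weighted Gao constant `E_A(n)`: the least `k > 0` such that every
sequence of length `k` in `ZMod n` has an `A`-weighted zero-sum subsequence of length `n`. -/
noncomputable def GaoC (n : ℕ) (A : Set (ZMod n)) : ℕ :=
  sInf {k | 0 < k ∧ ∀ S : List (ZMod n), S.length = k → HasWZSS A S n}

/-- The set of units of `ZMod n`. -/
def U (n : ℕ) : Set (ZMod n) := {x | IsUnit x}

/-- An `A`-extremal sequence for the Gao constant: a sequence of length `E_A(n) - 1`
with no `A`-weighted zero-sum subsequence of length `n`. -/
def IsGaoExtremal (n : ℕ) (A : Set (ZMod n)) (S : List (ZMod n)) : Prop :=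
  S.length = GaoC n A - 1 ∧ ¬ HasWZSS A S n

/-- `S` and `T` are `A`-equivalent: there are a unit `c`, weights `a i ∈ A` and a
permutation matching the multiset of terms `c * y j` with the multiset `a i * x i`. -/
def AEquiv {n : ℕ} (A : Set (ZMod n)) (S T : List (ZMod n)) : Prop :=
  ∃ c : ZMod n, IsUnit c ∧ ∃ w : List (ZMod n), w.length = S.length ∧
    (∀ a ∈ w, a ∈ A) ∧ (T.map fun y => c * y).Perm (List.zipWith (· * ·) w S)

/-- A term `x` of a sequence in `ZMod n` is an odd multiple of `2 ^ i` if `x = 2 ^ i * u`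
for some odd integer `u`. -/
def IsOddMultiple (n i : ℕ) (x : ZMod n) : Prop :=
  ∃ u : ℤ, Odd u ∧ x = (2 : ZMod n) ^ i * (u : ZMod n)


open Classical

section P1
variable {α : Type*} {K : Type*}

theorem pcount_nil (P : α → Prop) : pcount P ([] : List α) = 0 := rfl

theorem pcount_cons (P : α → Prop) (a : α) (l : List α) :
    pcount P (a :: l) = pcount P l + if P a then 1 else 0 := by
  simp [pcount, List.countP_cons]

theorem pcount_congr {P Q : α → Prop} {l : List α} (h : ∀ x ∈ l, P x ↔ Q x) :
    pcount P l = pcount Q l := by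
  unfold pcount; exact List.countP_congr (by simpa using h)

theorem pcount_le_length (P : α → Prop) (l : List α) : pcount P l ≤ l.length :=
  List.countP_le_length

theorem pcount_eq_zero {P : α → Prop} {l : List α} :
    pcount P l = 0 ↔ ∀ x ∈ l, ¬ P x := by
  simp [pcount, List.countP_eq_zero]

theorem pcount_pos {P : α → Prop} {l : List α} :
    0 < pcount P l ↔ ∃ x ∈ l, P x := by
  simp [pcount, List.countP_pos_iff]

theorem pcount_map {β : Type*} (P : β → Prop) (f : α → β) (l : List α) :
    pcount P (l.map f) = pcount (fun x => P (f x)) l := by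
  simp [pcount, List.countP_map]; rfl

theorem pcount_sublist (P : α → Prop) {l₁ l₂ : List α} (h : l₁.Sublist l₂) :
    pcount P l₁ ≤ pcount P l₂ := List.Sublist.countP_le h

/-- split a count along a second predicate -/
theorem pcount_split (P Q : α → Prop) (l : List α) :
    pcount P l = pcount (fun x => P x ∧ Q x) l + pcount (fun x => P x ∧ ¬ Q x) l := by
  induction l with
  | nil => rfl
  | cons a l ih =>
    rw [pcount_cons, pcount_cons, pcount_cons, ih]
    by_cases hP : P a <;> by_cases hQ : Q a <;> simp [hP, hQ] <;> omega

theorem pcount_append (P : α → Prop) (l₁ l₂ : List α) :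
    pcount P (l₁ ++ l₂) = pcount P l₁ + pcount P l₂ := by
  simp [pcount, List.countP_append]

theorem pcount_false (l : List α) : pcount (fun _ => False) l = 0 := by
  simp [pcount]

theorem pcount_filter (P Q : α → Prop) (l : List α) :
    pcount P (l.filter (fun x => decide (Q x))) = pcount (fun x => P x ∧ Q x) l := by
  unfold pcount
  rw [List.countP_filter]
  refine List.countP_congr (fun x _ => ?_)
  simp

theorem pcount_eq_length_filter (P : α → Prop) (l : List α) :
    pcount P l = (l.filter (fun x => decide (P x))).length := by
  unfold pcount
  rw [List.countP_eq_length_filter]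

/-- selection of a sublist with prescribed counts in each fiber of κ -/
theorem select [DecidableEq K] (κ : α → K) :
    ∀ (S : List α) (t : K → ℕ), (∀ k, t k ≤ pcount (fun x => κ x = k) S) →
      ∃ T, T.Sublist S ∧ ∀ k, pcount (fun x => κ x = k) T = t k := by
  intro S
  induction S with
  | nil =>
    intro t ht
    refine ⟨[], List.Sublist.refl _, fun k => ?_⟩
    have := ht k; simp [pcount_nil] at this ⊢; omega
  | cons a S ih =>
    intro t ht
    by_cases h0 : t (κ a) = 0
    · have ht' : ∀ k, t k ≤ pcount (fun x => κ x = k) S := by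
        intro k
        have := ht k
        rw [pcount_cons] at this
        by_cases hk : κ a = k
        · subst hk; omega
        · simpa [hk] using this
      obtain ⟨T, hT, hcount⟩ := ih t ht'
      exact ⟨T, hT.cons _, hcount⟩
    · set t' : K → ℕ := Function.update t (κ a) (t (κ a) - 1) with ht'def
      have ht' : ∀ k, t' k ≤ pcount (fun x => κ x = k) S := by
        intro k
        have := ht k
        rw [pcount_cons] at this
        by_cases hk : κ a = k
        · subst hk
          rw [if_pos rfl] at this; simp [ht'def]; omega
        · rw [ht'def, Function.update_of_ne (by exact fun h => hk h.symm)]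
          simpa [hk] using this
      obtain ⟨T, hT, hcount⟩ := ih t' ht'
      refine ⟨a :: T, hT.cons₂ _, fun k => ?_⟩
      rw [pcount_cons]
      by_cases hk : κ a = k
      · subst hk; have := hcount (κ a); simp [ht'def] at this; simp [this]; omega
      · have := hcount k
        rw [ht'def, Function.update_of_ne (by exact fun h => hk h.symm)] at this
        simpa [hk] using this

/-- length equals the sum of fiber counts -/
theorem length_eq_sum_pcount [DecidableEq K] (κ : α → K) (KS : Finset K) :
    ∀ (T : List α), (∀ x ∈ T, κ x ∈ KS) →
      T.length = ∑ k ∈ KS, pcount (fun x => κ x = k) T := by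
  intro T
  induction T with
  | nil => simp [pcount_nil]
  | cons a T ih =>
    intro h
    have ha : κ a ∈ KS := h a (by simp)
    have ih' := ih (fun x hx => h x (by simp [hx]))
    simp only [List.length_cons, pcount_cons]
    rw [Finset.sum_add_distrib, ← ih']
    congr 1
    symm
    exact (Finset.sum_eq_single_of_mem _ ha (fun b _ hb => if_neg (fun h => hb h.symm))).trans
      (if_pos rfl)

/-- distribute an amount f among caps indexed by a finset -/
theorem distribute (caps : ℕ → ℕ) (s : Finset ℕ) :
    ∀ f : ℕ, f ≤ ∑ i ∈ s, caps i →
      ∃ g : ℕ → ℕ, (∀ i, g i ≤ caps i) ∧ (∀ i, i ∉ s → g i = 0) ∧ ∑ i ∈ s, g i = f := by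
  classical
  induction s using Finset.induction with
  | empty => intro f hf; simp at hf; exact ⟨fun _ => 0, by simp, by simp, by simp [hf]⟩
  | @insert a s ha ih =>
    intro f hf
    rw [Finset.sum_insert ha] at hf
    obtain ⟨g, hg1, hg2, hg3⟩ := ih (f - min f (caps a)) (by omega)
    refine ⟨Function.update g a (min f (caps a)), fun i => ?_, fun i hi => ?_, ?_⟩
    · by_cases hia : i = a
      · subst hia; simp
      · rw [Function.update_of_ne hia]; exact hg1 i
    · rw [Function.update_of_ne (by rintro rfl; exact hi (Finset.mem_insert_self _ _)),
        ]
      exact hg2 i (fun h => hi (Finset.mem_insert_of_mem h))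
    · rw [Finset.sum_insert ha, Function.update_self]
      have : ∑ i ∈ s, Function.update g a (min f (caps a)) i = ∑ i ∈ s, g i :=
        Finset.sum_congr rfl (fun i hi => Function.update_of_ne (by rintro rfl; exact ha hi) _ _)
      rw [this, hg3]; omega

/-- if all values are ≤ 1 on an interval and one is 0 the sum is less than the length -/
theorem sum_le_of_all_le_one {c : ℕ → ℕ} {lo hi : ℕ} (h : ∀ i, lo ≤ i → i < hi → c i ≤ 1) :
    ∑ i ∈ Finset.Ico lo hi, c i ≤ hi - lo := by
  calc ∑ i ∈ Finset.Ico lo hi, c i ≤ ∑ i ∈ Finset.Ico lo hi, 1 := by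
        refine Finset.sum_le_sum ?_
        intro i hi; rw [Finset.mem_Ico] at hi; exact h i hi.1 hi.2
    _ = hi - lo := by simp

theorem sum_eq_zero_all {c : ℕ → ℕ} {s : Finset ℕ} (h : ∑ i ∈ s, c i = 0) :
    ∀ i ∈ s, c i = 0 := by
  intro i hi
  exact (Finset.sum_eq_zero_iff).1 h i hi

theorem all_one_of_sum {c : ℕ → ℕ} {lo hi : ℕ} (hle : ∀ i, lo ≤ i → i < hi → c i ≤ 1)
    (hsum : hi - lo ≤ ∑ i ∈ Finset.Ico lo hi, c i) :
    ∀ i, lo ≤ i → i < hi → c i = 1 := by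
  by_contra hc
  push_neg at hc
  obtain ⟨i, hi1, hi2, hi3⟩ := hc
  have h0 : c i = 0 := by have := hle i hi1 hi2; omega
  have hmem : i ∈ Finset.Ico lo hi := Finset.mem_Ico.mpr ⟨hi1, hi2⟩
  have : ∑ j ∈ Finset.Ico lo hi, c j = ∑ j ∈ (Finset.Ico lo hi).erase i, c j := by
    rw [← Finset.add_sum_erase _ _ hmem, h0, zero_add]
  rw [this] at hsum
  have hcard : ∑ j ∈ (Finset.Ico lo hi).erase i, c j ≤ ((Finset.Ico lo hi).erase i).card := by
    refine Finset.sum_le_card_nsmul _ _ 1 ?_ |>.trans (by simp)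
    intro j hj
    rw [Finset.mem_erase, Finset.mem_Ico] at hj
    exact hle j hj.2.1 hj.2.2
  rw [Finset.card_erase_of_mem hmem] at hcard
  simp [Nat.card_Ico] at hcard
  omega

end P1

section P2

variable {r : ℕ}

instance nz2r : NeZero (2^r) := ⟨pow_ne_zero r two_ne_zero⟩

theorem unit_of_two_mul_add_one (hr : 1 ≤ r) (t : ZMod (2^r)) : IsUnit (2 * t + 1) := by
  have h1 : (2 * t + 1 : ZMod (2^r)) = ((2 * t.val + 1 : ℕ) : ZMod (2^r)) := by
    push_cast [ZMod.natCast_val, ZMod.cast_id]; ring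
  rw [h1, ZMod.isUnit_iff_coprime]
  refine Nat.Coprime.pow_right _ ?_
  rw [Nat.coprime_comm, Nat.Prime.coprime_iff_not_dvd Nat.prime_two]
  omega

theorem odd_val_of_unit {u : ZMod (2^r)} (hr : 1 ≤ r) (hu : IsUnit u) : ¬ 2 ∣ u.val := by
  intro h2
  have hc : Nat.Coprime u.val (2^r) := by
    rw [← ZMod.isUnit_iff_coprime]
    simpa [ZMod.natCast_val, ZMod.cast_id] using hu
  have : (2:ℕ) ∣ Nat.gcd u.val (2^r) := Nat.dvd_gcd h2 (dvd_pow_self 2 (by omega))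
  rw [hc] at this; omega

theorem unit_decomp {u : ZMod (2^r)} (hr : 1 ≤ r) (hu : IsUnit u) :
    ∃ t : ZMod (2^r), u = 2 * t + 1 := by
  have hodd := odd_val_of_unit hr hu
  refine ⟨((u.val / 2 : ℕ) : ZMod (2^r)), ?_⟩
  have h1 : u = ((u.val : ℕ) : ZMod (2^r)) := by simp [ZMod.natCast_val, ZMod.cast_id]
  have h2 : u.val = 2 * (u.val / 2) + 1 := by omega
  conv_lhs => rw [h1, h2]
  push_cast; ring

theorem unit_of_odd_natCast (hr : 1 ≤ r) {w : ℕ} (hw : ¬ 2 ∣ w) :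
    IsUnit ((w : ℕ) : ZMod (2^r)) := by
  have : w = 2 * (w / 2) + 1 := by omega
  rw [this]; push_cast
  exact unit_of_two_mul_add_one hr _

/-- 2-adic class of an element of `ZMod (2^r)`; `r` for the zero element. -/
noncomputable def nu (r : ℕ) (y : ZMod (2^r)) : ℕ :=
  if y = 0 then r else padicValNat 2 y.val

theorem nu_zero : nu r (0 : ZMod (2^r)) = r := by simp [nu]

theorem nu_lt_of_ne {y : ZMod (2^r)} (hy : y ≠ 0) : nu r y < r := by
  rw [nu, if_neg hy]
  have hval : y.val ≠ 0 := by simpa [ZMod.val_eq_zero] using hy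
  have h1 : 2 ^ (padicValNat 2 y.val) ∣ y.val := pow_padicValNat_dvd
  have h2 : y.val < 2 ^ r := ZMod.val_lt y
  have := Nat.le_of_dvd (Nat.pos_of_ne_zero hval) h1
  by_contra hcon
  push_neg at hcon
  have : (2:ℕ)^r ≤ 2 ^ (padicValNat 2 y.val) := Nat.pow_le_pow_right (by norm_num) hcon
  omega

theorem nu_le (y : ZMod (2^r)) : nu r y ≤ r := by
  by_cases hy : y = 0
  · simp [hy, nu_zero]
  · exact (nu_lt_of_ne hy).le

theorem nu_eq_r_iff {y : ZMod (2^r)} : nu r y = r ↔ y = 0 := by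
  constructor
  · intro h; by_contra hy; exact absurd h (nu_lt_of_ne hy).ne
  · rintro rfl; exact nu_zero

theorem dvd_val_of_le_nu {y : ZMod (2^r)} {m : ℕ} (h : m ≤ nu r y) : 2^m ∣ y.val := by
  by_cases hy : y = 0
  · simp [hy]
  · rw [nu, if_neg hy] at h
    have hval : y.val ≠ 0 := by simpa [ZMod.val_eq_zero] using hy
    exact (padicValNat_dvd_iff m y.val).2 (Or.inr h)

theorem le_nu_of_dvd_val {y : ZMod (2^r)} {m : ℕ} (hm : m ≤ r) (h : 2^m ∣ y.val) :
    m ≤ nu r y := by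
  by_cases hy : y = 0
  · simp [hy, nu_zero, hm]
  · rw [nu, if_neg hy]
    have hval : y.val ≠ 0 := by simpa [ZMod.val_eq_zero] using hy
    rcases (padicValNat_dvd_iff m y.val).1 h with h' | h'
    · exact absurd h' hval
    · exact h'

theorem ring_dvd_of_dvd_val {y : ZMod (2^r)} {m : ℕ} (h : 2^m ∣ y.val) :
    ∃ z : ZMod (2^r), y = 2^m * z := by
  obtain ⟨w, hw⟩ := h
  refine ⟨((w : ℕ) : ZMod (2^r)), ?_⟩
  have : y = ((y.val : ℕ) : ZMod (2^r)) := by simp [ZMod.natCast_val, ZMod.cast_id]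
  rw [this, hw]; push_cast; ring

theorem nu_spec {y : ZMod (2^r)} {i : ℕ} (hi : i < r) :
    nu r y = i ↔ ∃ v : ZMod (2^r), IsUnit v ∧ y = 2^i * v := by
  constructor
  · intro h
    have hy : y ≠ 0 := by
      intro h0; rw [h0, nu_zero] at h; omega
    have hval : y.val ≠ 0 := by simpa [ZMod.val_eq_zero] using hy
    have hdvd : 2^i ∣ y.val := dvd_val_of_le_nu h.ge
    obtain ⟨w, hw⟩ := hdvd
    have hwodd : ¬ 2 ∣ w := by
      intro h2
      have : 2^(i+1) ∣ y.val := by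
        obtain ⟨w', hw'⟩ := h2
        exact ⟨w', by rw [hw, hw']; ring⟩
      rcases (padicValNat_dvd_iff (i+1) y.val).1 this with h' | h'
      · exact hval h'
      · rw [nu, if_neg hy] at h; omega
    refine ⟨((w:ℕ) : ZMod (2^r)), unit_of_odd_natCast (by omega) hwodd, ?_⟩
    have hy1 : y = ((y.val : ℕ) : ZMod (2^r)) := by simp [ZMod.natCast_val, ZMod.cast_id]
    rw [hy1, hw]; push_cast; try ring
  · rintro ⟨v, hv, rfl⟩
    have hvodd := odd_val_of_unit (by omega) hv
    have hNval : ((2^i * v : ZMod (2^r))).val = (2^i * v.val) % 2^r := by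
      have : (2^i * v : ZMod (2^r)) = ((2^i * v.val : ℕ) : ZMod (2^r)) := by
        push_cast [ZMod.natCast_val, ZMod.cast_id]; ring
      rw [this, ZMod.val_natCast]
    have hne : (2^i * v : ZMod (2^r)) ≠ 0 := by
      intro h0
      have hdd : ((2^i * v.val : ℕ) : ZMod (2^r)) = 0 := by
        push_cast [ZMod.natCast_val, ZMod.cast_id]; rw [← h0]; try ring
      rw [ZMod.natCast_eq_zero_iff] at hdd
      have h1 : (2:ℕ)^i * 2^(r-i) ∣ 2^i * v.val := by
        rw [← pow_add]
        have hri : i + (r - i) = r := by omega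
        rw [hri]; exact hdd
      have h2 : (2:ℕ)^(r-i) ∣ v.val := (Nat.mul_dvd_mul_iff_left ((pow_pos (by norm_num : (0:ℕ) < 2) i))).1 h1
      exact hvodd ((dvd_pow_self 2 (by omega : r - i ≠ 0)).trans h2)
    rw [nu, if_neg hne]
    have hdvd1 : 2^i ∣ (2^i * v : ZMod (2^r)).val := by
      rw [hNval, Nat.dvd_mod_iff (pow_dvd_pow 2 hi.le)]
      exact Dvd.intro _ rfl
    have hdvd2 : ¬ 2^(i+1) ∣ (2^i * v : ZMod (2^r)).val := by
      rw [hNval, Nat.dvd_mod_iff (pow_dvd_pow 2 hi)]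
      intro h
      have : (2:ℕ)^i * 2 ∣ 2^i * v.val := by rw [mul_comm (2^i) 2, ← pow_succ']; exact h
      exact hvodd ((Nat.mul_dvd_mul_iff_left ((pow_pos (by norm_num : (0:ℕ) < 2) i))).1 this)
    have hvne : (2^i * v : ZMod (2^r)).val ≠ 0 := by
      simpa [ZMod.val_eq_zero] using hne
    rcases (padicValNat_dvd_iff i _).1 hdvd1 with h' | h'
    · exact absurd h' hvne
    · rcases Nat.lt_or_ge (padicValNat 2 (2^i * v : ZMod (2^r)).val) (i+1) with h'' | h''
      · omega
      · exact absurd ((padicValNat_dvd_iff (i+1) _).2 (Or.inr h'')) hdvd2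

theorem zipWith_one_mul {M : Type*} [Monoid M] : ∀ l : List M,
    List.zipWith (· * ·) (List.replicate l.length 1) l = l := by
  intro l; induction l with
  | nil => rfl
  | cons a l ih => simp [List.replicate_succ, ih]

theorem sum_all_dvd {m : ℕ} (hm : m ≤ r) : ∀ l : List (ZMod (2^r)),
    (∀ x ∈ l, 2^m ∣ x.val) → ∃ s, l.sum = 2^m * s := by
  intro l; induction l with
  | nil => exact fun _ => ⟨0, by simp⟩
  | cons a l ih =>
    intro h
    obtain ⟨z, hz⟩ := ring_dvd_of_dvd_val (h a (by simp))
    obtain ⟨s, hs⟩ := ih (fun x hx => h x (by simp [hx]))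
    exact ⟨z + s, by simp [hz, hs]; ring⟩

/-- Key construction mod 2^r : achievable weighted sums. -/
theorem lemD {m : ℕ} (hm : m < r) :
    ∀ (y : List (ZMod (2^r))), (∀ x ∈ y, 2^m ∣ x.val) → (∃ x ∈ y, nu r x = m) →
    ∀ t : ZMod (2^r), ∃ w : List (ZMod (2^r)), w.length = y.length ∧ (∀ u ∈ w, IsUnit u) ∧
      (List.zipWith (· * ·) w y).sum
        = 2^m * (2 * t + (pcount (fun x => nu r x = m) y : ZMod (2^r))) := by
  intro y
  induction y with
  | nil => rintro _ ⟨x, hx, _⟩; simp at hx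
  | cons a ys ih =>
    intro hdvd hex t
    by_cases ha : nu r a = m
    · obtain ⟨v, hv, hav⟩ := (nu_spec hm).1 ha
      obtain ⟨t', ht'⟩ := unit_decomp (by omega) hv
      by_cases hys : ∃ x ∈ ys, nu r x = m
      · obtain ⟨w, hwl, hwu, hws⟩ := ih (fun x hx => hdvd x (by simp [hx])) hys (t - t')
        refine ⟨1 :: w, by simp [hwl], ?_, ?_⟩
        · intro u hu; rcases List.mem_cons.1 hu with h | h
          · rw [h]; exact isUnit_one
          · exact hwu u h
        · simp only [List.zipWith_cons_cons, List.sum_cons, hws, pcount_cons, if_pos ha]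
          rw [hav, ht']; push_cast; ring
      · -- all of ys is divisible by 2^(m+1)
        have hys2 : ∀ x ∈ ys, 2^(m+1) ∣ x.val := by
          intro x hx
          have h1 : m ≤ nu r x := le_nu_of_dvd_val hm.le (hdvd x (by simp [hx]))
          have h2 : nu r x ≠ m := fun h => hys ⟨x, hx, h⟩
          exact dvd_val_of_le_nu (by omega)
        obtain ⟨s, hs⟩ := sum_all_dvd (show m+1 ≤ r by omega) ys hys2
        obtain ⟨vu, hvu⟩ := hv
        refine ⟨(↑vu⁻¹ * (2 * (t - s) + 1)) :: List.replicate ys.length 1, by simp, ?_, ?_⟩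
        · intro u hu; rcases List.mem_cons.1 hu with h | h
          · rw [h]; exact (vu⁻¹).isUnit.mul (unit_of_two_mul_add_one (by omega) _)
          · rw [List.eq_of_mem_replicate h]; exact isUnit_one
        · simp only [List.zipWith_cons_cons, List.sum_cons, zipWith_one_mul, hs]
          have hcnt : pcount (fun x => nu r x = m) (a :: ys) = 1 := by
            rw [pcount_cons, if_pos ha]
            have : pcount (fun x => nu r x = m) ys = 0 := by
              by_contra hc
              have : 0 < pcount (fun x => nu r x = m) ys := Nat.pos_of_ne_zero hc
              rw [pcount_pos] at this
              exact hys this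
            omega
          rw [hcnt, hav]
          have hkey : ((↑vu⁻¹ : ZMod (2^r)) * (2 * (t - s) + 1)) * (2^m * v)
              = 2^m * (2 * (t - s) + 1) := by
            rw [← hvu]
            have hinv : ((↑vu⁻¹ : ZMod (2^r)) * ↑vu) = 1 := vu.inv_mul
            calc ((↑vu⁻¹ : ZMod (2^r)) * (2 * (t - s) + 1)) * (2^m * ↑vu)
                = ((↑vu⁻¹ : ZMod (2^r)) * ↑vu) * (2^m * (2 * (t - s) + 1)) := by ring
              _ = 2^m * (2 * (t - s) + 1) := by rw [hinv, one_mul]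
          rw [hkey]; push_cast; ring
    · -- head not of class m, so divisible by 2^{m+1}
      have hys : ∃ x ∈ ys, nu r x = m := by
        obtain ⟨x, hx, hxm⟩ := hex
        rcases List.mem_cons.1 hx with h | h
        · exact absurd (h ▸ hxm) ha
        · exact ⟨x, h, hxm⟩
      have ha2 : 2^(m+1) ∣ a.val := by
        have h1 : m ≤ nu r a := le_nu_of_dvd_val hm.le (hdvd a (by simp))
        exact dvd_val_of_le_nu (by omega)
      obtain ⟨z, hz⟩ := ring_dvd_of_dvd_val ha2
      obtain ⟨w, hwl, hwu, hws⟩ := ih (fun x hx => hdvd x (by simp [hx])) hys (t - z)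
      refine ⟨1 :: w, by simp [hwl], ?_, ?_⟩
      · intro u hu; rcases List.mem_cons.1 hu with h | h
        · rw [h]; exact isUnit_one
        · exact hwu u h
      · simp only [List.zipWith_cons_cons, List.sum_cons, hws, pcount_cons, if_neg ha]
        rw [hz]; push_cast; ring

end P2

section P3

theorem zipWith_one_mul' {M : Type*} [Monoid M] : ∀ l : List M,
    List.zipWith (· * ·) (List.replicate l.length 1) l = l := by
  intro l; induction l with
  | nil => rfl
  | cons a l ih => simp [List.replicate_succ, ih]

theorem sum_zip_all_zero {M : Type*} [NonUnitalNonAssocSemiring M] :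
    ∀ (w l : List M), (∀ x ∈ l, x = 0) → (List.zipWith (· * ·) w l).sum = 0 := by
  intro w
  induction w with
  | nil => intro l _; simp
  | cons a w ih =>
    intro l hl
    cases l with
    | nil => simp
    | cons b l =>
      have hb : b = 0 := hl b (by simp)
      simp [hb, ih l (fun x hx => hl x (by simp [hx]))]

/-- If exactly one entry is nonzero and all weights are units, the weighted sum is nonzero. -/
theorem single_nonzero_sum {m : ℕ} [NeZero m] :
    ∀ (w y : List (ZMod m)), (∀ u ∈ w, IsUnit u) → y.length ≤ w.length →
      pcount (fun x => x ≠ 0) y = 1 → (List.zipWith (· * ·) w y).sum ≠ 0 := by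
  intro w
  induction w with
  | nil =>
    intro y _ hlen hcount
    have hy : y = [] := List.length_eq_zero_iff.1 (Nat.le_zero.1 hlen)
    subst hy; simp [pcount] at hcount
  | cons a w ih =>
    intro y hu hlen hcount
    cases y with
    | nil => simp [pcount] at hcount
    | cons b y =>
      rw [pcount_cons] at hcount
      by_cases hb : b ≠ 0
      · rw [if_pos hb] at hcount
        have hy0 : ∀ x ∈ y, x = 0 := by
          have : pcount (fun x => x ≠ 0) y = 0 := by omega
          have := pcount_eq_zero.1 this
          intro x hx; by_contra hxne; exact (this x hx) hxne
        simp only [List.zipWith_cons_cons, List.sum_cons]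
        rw [sum_zip_all_zero w y hy0, add_zero]
        have ha : IsUnit a := hu a (by simp)
        intro hab
        exact hb (by
          obtain ⟨au, hau⟩ := ha
          have := congrArg (fun z => (↑au⁻¹ : ZMod m) * z) hab
          simp only [mul_zero] at this
          rw [← mul_assoc, ← hau, Units.inv_mul, one_mul] at this
          exact this)
      · push_neg at hb
        rw [if_neg (by simp [hb])] at hcount
        simp only [List.zipWith_cons_cons, List.sum_cons, hb, mul_zero, zero_add]
        exact ih y (fun u huu => hu u (by simp [huu])) (by simpa using Nat.succ_le_succ_iff.1 hlen) (by omega)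

variable {p : ℕ} [hpf : Fact p.Prime]

theorem lemB (hp2 : p ≠ 2) :
    ∀ (y : List (ZMod p)), (∃ x ∈ y, x ≠ 0) → ∀ z : ZMod p, z ≠ 0 →
      ∃ w : List (ZMod p), w.length = y.length ∧ (∀ u ∈ w, IsUnit u) ∧
        (List.zipWith (· * ·) w y).sum = z := by
  intro y
  induction y with
  | nil => rintro ⟨x, hx, _⟩; simp at hx
  | cons a ys ih =>
    rintro ⟨x, hx, hxne⟩ z hz
    by_cases ha : a = 0
    · have hys : ∃ x ∈ ys, x ≠ 0 := by
        rcases List.mem_cons.1 hx with h | h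
        · exact absurd (h ▸ hxne) (by simp [ha])
        · exact ⟨x, h, hxne⟩
      obtain ⟨w, hwl, hwu, hws⟩ := ih hys z hz
      exact ⟨1 :: w, by simp [hwl], by
        intro u hu; rcases List.mem_cons.1 hu with h | h
        · rw [h]; exact isUnit_one
        · exact hwu u h, by simp [ha, hws]⟩
    · by_cases hys : ∃ x ∈ ys, x ≠ 0
      · -- choose c ∈ {1, -1} with c * a ≠ z
        have h2 : (2 : ZMod p) ≠ 0 := by
          have : ((2:ℕ) : ZMod p) ≠ 0 := by
            rw [Ne, ZMod.natCast_eq_zero_iff]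
            intro hdvd
            rcases (Nat.prime_two.eq_one_or_self_of_dvd p hdvd) with h | h
            · exact Nat.Prime.one_lt hpf.out |>.ne' h
            · exact hp2 h
          simpa using this
        obtain ⟨c, hcu, hca⟩ : ∃ c : ZMod p, IsUnit c ∧ c * a ≠ z := by
          by_cases h1 : a ≠ z
          · exact ⟨1, isUnit_one, by simpa using h1⟩
          · push_neg at h1
            refine ⟨-1, (isUnit_one).neg, ?_⟩
            rw [h1]
            intro hcon
            have : (2 : ZMod p) * z = 0 := by linear_combination - hcon
            rcases mul_eq_zero.1 this with h | h
            · exact h2 h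
            · exact hz h
        obtain ⟨w, hwl, hwu, hws⟩ := ih hys (z - c * a) (by
          intro hcon
          exact hca (sub_eq_zero.1 hcon).symm)
        refine ⟨c :: w, by simp [hwl], ?_, ?_⟩
        · intro u hu; rcases List.mem_cons.1 hu with h | h
          · rw [h]; exact hcu
          · exact hwu u h
        · simp [hws]; try ring
      · -- all of ys is zero
        push_neg at hys
        refine ⟨(z * a⁻¹) :: List.replicate ys.length 1, by simp, ?_, ?_⟩
        · intro u hu; rcases List.mem_cons.1 hu with h | h
          · rw [h]
            exact (isUnit_iff_ne_zero.2 hz).mul (isUnit_iff_ne_zero.2 (inv_ne_zero ha))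
          · rw [List.eq_of_mem_replicate h]; exact isUnit_one
        · simp only [List.zipWith_cons_cons, List.sum_cons, zipWith_one_mul']
          rw [List.sum_eq_zero hys, add_zero, mul_assoc, inv_mul_cancel₀ ha, mul_one]
  
theorem lemA (hp2 : p ≠ 2) :
    ∀ (y : List (ZMod p)), pcount (fun x => x ≠ 0) y ≠ 1 →
      ∃ w : List (ZMod p), w.length = y.length ∧ (∀ u ∈ w, IsUnit u) ∧
        (List.zipWith (· * ·) w y).sum = 0 := by
  intro y
  induction y with
  | nil => intro _; exact ⟨[], rfl, by simp, by simp⟩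
  | cons a ys ih =>
    intro hcount
    rw [pcount_cons] at hcount
    by_cases ha : a = 0
    · rw [if_neg (by simp [ha])] at hcount
      obtain ⟨w, hwl, hwu, hws⟩ := ih (by omega)
      refine ⟨1 :: w, by simp [hwl], ?_, by simp [ha, hws]⟩
      intro u hu; rcases List.mem_cons.1 hu with h | h
      · rw [h]; exact isUnit_one
      · exact hwu u h
    · rw [if_pos ha] at hcount
      have hpos : 0 < pcount (fun x => x ≠ 0) ys := by omega
      have hys : ∃ x ∈ ys, x ≠ 0 := pcount_pos.1 hpos
      obtain ⟨w, hwl, hwu, hws⟩ := lemB hp2 ys hys (-a) (by simpa using ha)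
      refine ⟨1 :: w, by simp [hwl], ?_, by simp [hws]⟩
      intro u hu; rcases List.mem_cons.1 hu with h | h
      · rw [h]; exact isUnit_one
      · exact hwu u h

end P3

section P4

/-! ## CRT glue for `ZMod (2^r * p)` -/

variable {r p : ℕ}

/-- reduction mod `2^r` -/
noncomputable def f2 (r p : ℕ) : ZMod (2^r * p) →+* ZMod (2^r) :=
  ZMod.castHom (dvd_mul_right _ _) _

/-- reduction mod `p` -/
noncomputable def fp (r p : ℕ) : ZMod (2^r * p) →+* ZMod p :=
  ZMod.castHom (dvd_mul_left _ _) _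

/-- the 2-adic class of an element of `ZMod (2^r * p)` -/
noncomputable def nuN (r p : ℕ) (x : ZMod (2^r * p)) : ℕ := nu r (f2 r p x)

theorem hcop (hp : p.Prime) (hp2 : p ≠ 2) : Nat.Coprime (2^r) p :=
  Nat.Coprime.pow_left _ (((Nat.coprime_primes Nat.prime_two hp).2 (fun h => hp2 h.symm)))

theorem NeZeroN (hp : p.Prime) : (2^r * p) ≠ 0 :=
  mul_ne_zero (pow_ne_zero _ two_ne_zero) hp.ne_zero

theorem f2_apply (hp : p.Prime) (x : ZMod (2^r * p)) :
    f2 r p x = ((x.val : ℕ) : ZMod (2^r)) := by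
  haveI : NeZero (2^r * p) := ⟨NeZeroN hp⟩
  rw [f2, ZMod.castHom_apply, ← ZMod.natCast_val]

theorem fp_apply (hp : p.Prime) (x : ZMod (2^r * p)) :
    fp r p x = ((x.val : ℕ) : ZMod p) := by
  haveI : NeZero (2^r * p) := ⟨NeZeroN hp⟩
  rw [fp, ZMod.castHom_apply, ← ZMod.natCast_val]

theorem inj2p (hp : p.Prime) (hp2 : p ≠ 2) {x : ZMod (2^r * p)}
    (h2 : f2 r p x = 0) (hpp : fp r p x = 0) : x = 0 := by
  haveI : NeZero (2^r * p) := ⟨NeZeroN hp⟩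
  rw [f2_apply hp, ZMod.natCast_eq_zero_iff] at h2
  rw [fp_apply hp, ZMod.natCast_eq_zero_iff] at hpp
  have hdvd : 2^r * p ∣ x.val := (hcop hp hp2).mul_dvd_of_dvd_of_dvd h2 hpp
  have := ZMod.val_lt x
  have hv : x.val = 0 := by
    rcases Nat.eq_zero_or_pos x.val with h | h
    · exact h
    · exact absurd (Nat.le_of_dvd h hdvd) (by omega)
  have hxx : x = ((x.val : ℕ) : ZMod (2^r * p)) := by simp [ZMod.natCast_val, ZMod.cast_id]
  rw [hxx, hv, Nat.cast_zero]

theorem e_fst (hp : p.Prime) (hp2 : p ≠ 2) (x : ZMod (2^r * p)) :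
    ((ZMod.chineseRemainder (hcop hp hp2) x)).1 = f2 r p x := by
  haveI : NeZero (2^r * p) := ⟨NeZeroN hp⟩
  have hx : x = ((x.val : ℕ) : ZMod (2^r * p)) := by simp [ZMod.natCast_val, ZMod.cast_id]
  rw [f2_apply hp]
  conv_lhs => rw [hx]
  simp only [map_natCast, Prod.fst_natCast]

theorem e_snd (hp : p.Prime) (hp2 : p ≠ 2) (x : ZMod (2^r * p)) :
    ((ZMod.chineseRemainder (hcop hp hp2) x)).2 = fp r p x := by
  haveI : NeZero (2^r * p) := ⟨NeZeroN hp⟩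
  have hx : x = ((x.val : ℕ) : ZMod (2^r * p)) := by simp [ZMod.natCast_val, ZMod.cast_id]
  rw [fp_apply hp]
  conv_lhs => rw [hx]
  simp only [map_natCast, Prod.snd_natCast]

theorem esymm_fst (hp : p.Prime) (hp2 : p ≠ 2) (a : ZMod (2^r)) (b : ZMod p) :
    f2 r p ((ZMod.chineseRemainder (hcop hp hp2)).symm (a, b)) = a := by
  have := e_fst hp hp2 ((ZMod.chineseRemainder (hcop hp hp2)).symm (a, b))
  rw [RingEquiv.apply_symm_apply] at this
  exact this.symm

theorem esymm_snd (hp : p.Prime) (hp2 : p ≠ 2) (a : ZMod (2^r)) (b : ZMod p) :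
    fp r p ((ZMod.chineseRemainder (hcop hp hp2)).symm (a, b)) = b := by
  have := e_snd hp hp2 ((ZMod.chineseRemainder (hcop hp hp2)).symm (a, b))
  rw [RingEquiv.apply_symm_apply] at this
  exact this.symm

theorem isUnit_pair {A B : Type*} [Monoid A] [Monoid B] {a : A} {b : B}
    (ha : IsUnit a) (hb : IsUnit b) : IsUnit ((a, b) : A × B) := by
  obtain ⟨ua, rfl⟩ := ha
  obtain ⟨ub, rfl⟩ := hb
  exact ⟨⟨((ua : A), (ub : B)), ((↑ua⁻¹ : A), (↑ub⁻¹ : B)),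
    by simp [Prod.ext_iff], by simp [Prod.ext_iff]⟩, rfl⟩

theorem esymm_unit (hp : p.Prime) (hp2 : p ≠ 2) {a : ZMod (2^r)} {b : ZMod p}
    (ha : IsUnit a) (hb : IsUnit b) :
    IsUnit ((ZMod.chineseRemainder (hcop hp hp2)).symm (a, b)) := by
  have := (isUnit_pair ha hb).map
    ((ZMod.chineseRemainder (hcop hp hp2)).symm.toRingHom : ZMod (2^r) × ZMod p →+* ZMod (2^r * p))
  simpa using this

theorem mem_zipWith {α β γ : Type*} (f : α → β → γ) :
    ∀ (l₁ : List α) (l₂ : List β) (z : γ), z ∈ List.zipWith f l₁ l₂ →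
      ∃ a ∈ l₁, ∃ b ∈ l₂, z = f a b := by
  intro l₁
  induction l₁ with
  | nil => intro l₂ z h; simp at h
  | cons a l₁ ih =>
    intro l₂ z h
    cases l₂ with
    | nil => simp at h
    | cons b l₂ =>
      rcases List.mem_cons.1 h with h | h
      · exact ⟨a, by simp, b, by simp, h⟩
      · obtain ⟨a', ha', b', hb', hz⟩ := ih l₂ z h
        exact ⟨a', by simp [ha'], b', by simp [hb'], hz⟩

theorem hom_zip_sum {R S : Type*} [NonAssocSemiring R] [NonAssocSemiring S] (f : R →+* S) :
    ∀ (w T : List R),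
      f ((List.zipWith (· * ·) w T).sum) = (List.zipWith (· * ·) (w.map f) (T.map f)).sum := by
  intro w
  induction w with
  | nil => intro T; simp
  | cons a w ih =>
    intro T
    cases T with
    | nil => simp
    | cons x T => simp [ih T]

/-- a combined weight list from mod-2^r and mod-p weights -/
theorem combine_weights (hp : p.Prime) (hp2 : p ≠ 2) (T : List (ZMod (2^r * p)))
    (w2 : List (ZMod (2^r))) (wp : List (ZMod p))
    (h2l : w2.length = T.length) (hpl : wp.length = T.length)
    (h2u : ∀ u ∈ w2, IsUnit u) (hpu : ∀ u ∈ wp, IsUnit u)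
    (h2s : (List.zipWith (· * ·) w2 (T.map (f2 r p))).sum = 0)
    (hps : (List.zipWith (· * ·) wp (T.map (fp r p))).sum = 0) :
    IsWZSum (U (2^r * p)) T := by
  classical
  set e := ZMod.chineseRemainder (hcop (r := r) hp hp2) with he
  set w : List (ZMod (2^r * p)) := List.zipWith (fun a b => e.symm (a, b)) w2 wp with hw
  have hwlen : w.length = T.length := by
    rw [hw, List.length_zipWith]; omega
  refine ⟨w, hwlen, ?_, ?_⟩
  · intro u hu
    obtain ⟨a, ha, b, hb, rfl⟩ := mem_zipWith _ w2 wp u hu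
    exact esymm_unit hp hp2 (h2u a ha) (hpu b hb)
  · -- the weighted sum is 0; check both components
    have key2 : ∀ (w2 : List (ZMod (2^r))) (wp : List (ZMod p)) (T : List (ZMod (2^r*p))),
        wp.length = w2.length →
        f2 r p ((List.zipWith (· * ·) (List.zipWith (fun a b => e.symm (a, b)) w2 wp) T).sum)
          = (List.zipWith (· * ·) w2 (T.map (f2 r p))).sum := by
      intro w2
      induction w2 with
      | nil => intro wp T _; simp
      | cons a w2 ih =>
        intro wp T hlen
        cases wp with
        | nil => simp at hlen
        | cons b wp =>
          cases T with
          | nil => simp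
          | cons x T =>
            simp only [List.zipWith_cons_cons, List.sum_cons, List.map_cons, map_add, map_mul]
            rw [ih wp T (by simpa using hlen), esymm_fst hp hp2]
    have keyp : ∀ (w2 : List (ZMod (2^r))) (wp : List (ZMod p)) (T : List (ZMod (2^r*p))),
        wp.length = w2.length →
        fp r p ((List.zipWith (· * ·) (List.zipWith (fun a b => e.symm (a, b)) w2 wp) T).sum)
          = (List.zipWith (· * ·) wp (T.map (fp r p))).sum := by
      intro w2
      induction w2 with
      | nil =>
        intro wp T hlen
        have : wp = [] := List.length_eq_zero_iff.1 (by simpa using hlen)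
        simp [this]
      | cons a w2 ih =>
        intro wp T hlen
        cases wp with
        | nil => simp at hlen
        | cons b wp =>
          cases T with
          | nil => simp
          | cons x T =>
            simp only [List.zipWith_cons_cons, List.sum_cons, List.map_cons, map_add, map_mul]
            rw [ih wp T (by simpa using hlen), esymm_snd hp hp2]
    apply inj2p hp hp2
    · rw [hw, key2 w2 wp T (by omega), h2s]
    · rw [hw, keyp w2 wp T (by omega), hps]

end P4

section P5
variable {r p : ℕ}

theorem nuN_le (x : ZMod (2^r * p)) : nuN r p x ≤ r := nu_le _

theorem crit (hr : 1 ≤ r) (hp : p.Prime) (hp2 : p ≠ 2) (T : List (ZMod (2^r * p)))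
    (hE2 : ∀ i < r, (∀ j < i, pcount (fun x => nuN r p x = j) T = 0) →
      Even (pcount (fun x => nuN r p x = i) T))
    (hEp : pcount (fun x => fp r p x ≠ 0) T ≠ 1) :
    IsWZSum (U (2^r * p)) T := by
  haveI : Fact p.Prime := ⟨hp⟩
  -- mod p weights
  have hEp' : pcount (fun y => y ≠ 0) (T.map (fp r p)) ≠ 1 := by
    rw [pcount_map]; exact hEp
  obtain ⟨wp, hpl, hpu, hps⟩ := lemA hp2 (T.map (fp r p)) hEp'
  -- mod 2^r weights
  by_cases hall : ∀ x ∈ T, f2 r p x = 0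
  · refine combine_weights hp hp2 T (List.replicate T.length 1) wp (by simp) (by simpa using hpl)
      (fun u hu => by rw [List.eq_of_mem_replicate hu]; exact isUnit_one) hpu ?_ hps
    have hlen : T.length = (T.map (f2 r p)).length := by simp
    rw [hlen, zipWith_one_mul]
    exact List.sum_eq_zero (by
      intro y hy
      obtain ⟨x, hx, rfl⟩ := List.mem_map.1 hy
      exact hall x hx)
  · push_neg at hall
    obtain ⟨x0, hx0T, hx0⟩ := hall
    have hEx : ∃ i, i < r ∧ 0 < pcount (fun x => nuN r p x = i) T :=
      ⟨nuN r p x0, nu_lt_of_ne hx0, pcount_pos.2 ⟨x0, hx0T, rfl⟩⟩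
    classical
    set m := Nat.find hEx with hm
    obtain ⟨hmr, hmpos⟩ := Nat.find_spec hEx
    have hmin : ∀ j < m, pcount (fun x => nuN r p x = j) T = 0 := by
      intro j hj
      have := Nat.find_min hEx hj
      push_neg at this
      rcases Nat.lt_or_ge j r with h | h
      · omega
      · rw [pcount_eq_zero]
        intro x hx hxj
        have := nuN_le x
        have : nuN r p x < r := by
          rw [hxj] at *
          omega
        omega
    have heven := hE2 m hmr hmin
    obtain ⟨k, hk⟩ := heven
    -- apply lemD to T.map f2
    have hdvd : ∀ y ∈ T.map (f2 r p), 2^m ∣ y.val := by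
      intro y hy
      obtain ⟨x, hx, rfl⟩ := List.mem_map.1 hy
      rcases Nat.lt_or_ge (nuN r p x) m with h | h
      · have hpos2 : 0 < pcount (fun y => nuN r p y = nuN r p x) T := pcount_pos.2 ⟨x, hx, rfl⟩
        rw [hmin _ h] at hpos2
        omega
      · exact dvd_val_of_le_nu h
    have hexm : ∃ y ∈ T.map (f2 r p), nu r y = m := by
      obtain ⟨x, hx, hxm⟩ := pcount_pos.1 hmpos
      exact ⟨f2 r p x, List.mem_map_of_mem hx, hxm⟩
    obtain ⟨w2, h2l, h2u, h2s⟩ := lemD hmr (T.map (f2 r p)) hdvd hexm (-(k : ZMod (2^r)))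
    refine combine_weights hp hp2 T w2 wp (by simpa using h2l) (by simpa using hpl) h2u hpu ?_ hps
    rw [h2s]
    have hcnt : pcount (fun y => nu r y = m) (T.map (f2 r p)) = k + k := by
      rw [pcount_map]; exact hk
    rw [hcnt]
    push_cast
    ring

theorem two_ne_zero_modp (hp : p.Prime) (hp2 : p ≠ 2) : (2 : ZMod p) ≠ 0 := by
  haveI : Fact p.Prime := ⟨hp⟩
  have : ((2:ℕ) : ZMod p) ≠ 0 := by
    rw [Ne, ZMod.natCast_eq_zero_iff]
    intro hdvd
    rcases (Nat.prime_two.eq_one_or_self_of_dvd p hdvd) with h | h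
    · exact hp.one_lt.ne' h
    · exact hp2 h
  simpa using this

theorem iom_iff (hr : 1 ≤ r) (hp : p.Prime) (hp2 : p ≠ 2) {i : ℕ} (hi : i < r)
    (x : ZMod (2^r * p)) : IsOddMultiple (2^r * p) i x ↔ nuN r p x = i := by
  haveI : Fact p.Prime := ⟨hp⟩
  haveI : NeZero (2^r * p) := ⟨NeZeroN hp⟩
  constructor
  · rintro ⟨u, hu, rfl⟩
    obtain ⟨k, hk⟩ := hu
    have hf : f2 r p ((2 : ZMod (2^r*p))^i * (u : ZMod (2^r*p)))
        = 2^i * ((u : ℤ) : ZMod (2^r)) := by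
      rw [map_mul, map_pow, map_intCast, map_ofNat]
    rw [nuN, hf, nu_spec hi]
    refine ⟨((u : ℤ) : ZMod (2^r)), ?_, rfl⟩
    rw [hk]
    push_cast
    exact unit_of_two_mul_add_one hr _
  · intro h
    rw [nuN, nu_spec hi] at h
    obtain ⟨v, hv, hfv⟩ := h
    set e := ZMod.chineseRemainder (hcop (r := r) hp hp2) with he
    set q := e.symm (v, ((2 : ZMod p)⁻¹)^i * fp r p x) with hq
    have hf2q : f2 r p q = v := esymm_fst hp hp2 _ _
    have hfpq : fp r p q = ((2 : ZMod p)⁻¹)^i * fp r p x := esymm_snd hp hp2 _ _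
    have hxq : x = 2^i * q := by
      have hzero : x - 2^i * q = 0 := by
        apply inj2p hp hp2
        · rw [map_sub, map_mul, map_pow, hf2q, hfv, map_ofNat, sub_self]
        · rw [map_sub, map_mul, map_pow, hfpq]
          have h2 : (2 : ZMod p) ≠ 0 := two_ne_zero_modp hp hp2
          have : (fp r p) 2 = (2 : ZMod p) := map_ofNat _ 2
          rw [this, ← mul_assoc, ← mul_pow, mul_inv_cancel₀ h2, one_pow, one_mul, sub_self]
      linear_combination hzero
    refine ⟨(q.val : ℤ), ?_, ?_⟩
    · -- q.val is odd
      have hvodd : ¬ 2 ∣ v.val := odd_val_of_unit hr hv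
      have hqv : (f2 r p q).val = q.val % 2^r := by
        rw [f2_apply hp, ZMod.val_natCast]
      have hq2 : ¬ 2 ∣ q.val := by
        intro h2q
        apply hvodd
        rw [← hf2q, hqv]
        have h2r : (2:ℕ) ∣ 2^r := dvd_pow_self 2 (by omega)
        exact (Nat.dvd_mod_iff h2r).2 h2q
      rw [Int.odd_iff]
      omega
    · rw [hxq]
      congr 1
      push_cast [ZMod.natCast_val, ZMod.cast_id]
      rfl

end P5

section P6
variable {r p : ℕ}

/-- number of terms of 2-adic class `i` that are nonzero mod `p` -/
noncomputable def aC (r p : ℕ) (S : List (ZMod (2^r * p))) (i : ℕ) : ℕ :=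
  pcount (fun x => nuN r p x = i ∧ fp r p x ≠ 0) S

/-- number of terms of 2-adic class `i` that are zero mod `p` -/
noncomputable def bC (r p : ℕ) (S : List (ZMod (2^r * p))) (i : ℕ) : ℕ :=
  pcount (fun x => nuN r p x = i ∧ fp r p x = 0) S

noncomputable def SA (r p : ℕ) (S : List (ZMod (2^r * p))) (lo : ℕ) : ℕ :=
  ∑ i ∈ Finset.Ico lo (r+1), aC r p S i

noncomputable def SB (r p : ℕ) (S : List (ZMod (2^r * p))) (lo : ℕ) : ℕ :=
  ∑ i ∈ Finset.Ico lo (r+1), bC r p S i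

noncomputable def kap (r p : ℕ) (x : ZMod (2^r * p)) : ℕ × Bool :=
  (nuN r p x, decide (fp r p x ≠ 0))

theorem kap_count_true (S : List (ZMod (2^r * p))) (i : ℕ) :
    pcount (fun x => kap r p x = (i, true)) S = aC r p S i := by
  unfold aC kap
  refine pcount_congr (fun x _ => ?_)
  simp [Prod.ext_iff]

theorem kap_count_false (S : List (ZMod (2^r * p))) (i : ℕ) :
    pcount (fun x => kap r p x = (i, false)) S = bC r p S i := by
  unfold bC kap
  refine pcount_congr (fun x _ => ?_)
  simp [Prod.ext_iff]

theorem pcount_snd_sum {Tt : List (ZMod (2^r * p))}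
    (hmem : ∀ x ∈ Tt, kap r p x ∈ (Finset.range (r+1)) ×ˢ (Finset.univ : Finset Bool)) :
    pcount (fun x => fp r p x ≠ 0) Tt
      = ∑ i ∈ Finset.range (r+1), pcount (fun x => kap r p x = (i, true)) Tt := by
  induction Tt with
  | nil => simp [pcount_nil]
  | cons a T ih =>
    have ha := hmem a (by simp)
    have hanu : nuN r p a ∈ Finset.range (r+1) := by
      rw [Finset.mem_product] at ha; exact ha.1
    have ih' := ih (fun x hx => hmem x (by simp [hx]))
    simp only [pcount_cons, ih', Finset.sum_add_distrib]
    congr 1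
    by_cases hfa : fp r p a ≠ 0
    · have hkapa : kap r p a = (nuN r p a, true) := by simp [kap, hfa]
      simp only [if_pos hfa, hkapa, Prod.mk.injEq, and_true]
      simp [Finset.sum_ite_eq, hanu]
    · have hkapa : ∀ i, kap r p a ≠ (i, true) := by
        intro i h
        apply hfa
        have := congrArg Prod.snd h
        simpa [kap] using this
      simp only [if_neg hfa, if_neg (hkapa _)]
      symm
      refine Finset.sum_eq_zero (fun i _ => ?_)
      simp [hkapa i]

theorem nu_count_split (S : List (ZMod (2^r * p))) (i : ℕ) :
    pcount (fun x => nuN r p x = i) S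
      = pcount (fun x => kap r p x = (i, true)) S + pcount (fun x => kap r p x = (i, false)) S := by
  rw [kap_count_true, kap_count_false]
  unfold aC bC
  rw [pcount_split (fun x => nuN r p x = i) (fun x => fp r p x ≠ 0) S]
  congr 1
  exact pcount_congr (fun x _ => by tauto)

theorem total_counts (S : List (ZMod (2^r * p))) :
    ∑ i ∈ Finset.range (r+1), (aC r p S i + bC r p S i) = S.length := by
  have hmem : ∀ x ∈ S, kap r p x ∈ (Finset.range (r+1)) ×ˢ (Finset.univ : Finset Bool) := by
    intro x _
    rw [Finset.mem_product, Finset.mem_range]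
    exact ⟨Nat.lt_succ_of_le (nuN_le x), Finset.mem_univ _⟩
  rw [length_eq_sum_pcount (kap r p) _ S hmem, Finset.sum_product]
  refine Finset.sum_congr rfl (fun i _ => ?_)
  rw [Fintype.sum_bool, kap_count_true, kap_count_false]

/-- Build a zero-sum subsequence of full length `n = 2^r * p` from per-class selection data. -/
theorem build (hr : 2 ≤ r) (hp : p.Prime) (hp2 : p ≠ 2) (S : List (ZMod (2^r * p)))
    (ta tb : ℕ → ℕ)
    (hta : ∀ i, ta i ≤ aC r p S i) (htb : ∀ i, tb i ≤ bC r p S i)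
    (htot : ∑ i ∈ Finset.range (r+1), (ta i + tb i) = 2^r * p)
    (hE2 : ∀ i < r, (∀ j < i, ta j + tb j = 0) → Even (ta i + tb i))
    (hEp : (∑ i ∈ Finset.range (r+1), ta i) = 0 ∨ 2 ≤ ∑ i ∈ Finset.range (r+1), ta i) :
    HasWZSS (U (2^r * p)) S (2^r * p) := by
  classical
  haveI : Fact p.Prime := ⟨hp⟩
  set t : ℕ × Bool → ℕ := fun k => if k.2 then ta k.1 else tb k.1 with htdef
  have hbound : ∀ k, t k ≤ pcount (fun x => kap r p x = k) S := by
    rintro ⟨i, b⟩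
    cases b
    · rw [kap_count_false]; exact htb i
    · rw [kap_count_true]; exact hta i
  obtain ⟨T, hTsub, hTcount⟩ := select (kap r p) S t hbound
  have hmem : ∀ x ∈ T, kap r p x ∈ (Finset.range (r+1)) ×ˢ (Finset.univ : Finset Bool) := by
    intro x _
    rw [Finset.mem_product, Finset.mem_range]
    exact ⟨Nat.lt_succ_of_le (nuN_le x), Finset.mem_univ _⟩
  have hTlen : T.length = 2^r * p := by
    rw [length_eq_sum_pcount (kap r p) _ T hmem, Finset.sum_product]
    refine Eq.trans (Finset.sum_congr rfl (fun i _ => ?_)) htot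
    rw [Fintype.sum_bool, hTcount, hTcount]
    simp [htdef]
  refine ⟨Nat.mul_pos ((pow_pos (by norm_num : (0:ℕ) < 2) r)) hp.pos, T, hTsub, hTlen, ?_⟩
  apply crit (by omega) hp hp2
  · intro i hi hz
    rw [nu_count_split, hTcount, hTcount]
    have : Even (ta i + tb i) := by
      apply hE2 i hi
      intro j hj
      have hzj := hz j hj
      rw [nu_count_split, hTcount, hTcount] at hzj
      simpa [htdef] using hzj
    simpa [htdef] using this
  · have heq : ∀ i ∈ Finset.range (r+1),
        pcount (fun x => kap r p x = (i, true)) T = ta i := by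
      intro i _; rw [hTcount]; rfl
    have hsum : pcount (fun x => fp r p x ≠ 0) T = ∑ i ∈ Finset.range (r+1), ta i := by
      rw [pcount_snd_sum hmem]; exact Finset.sum_congr rfl heq
    rw [hsum]
    rcases hEp with h | h <;> omega

/-- The main construction lemma: designated even minimum class `m` plus fill from above. -/
theorem master (hr : 2 ≤ r) (hp : p.Prime) (hp2 : p ≠ 2) (S : List (ZMod (2^r * p)))
    (m : ℕ) (hm : m < r) (α β fA fB : ℕ)
    (hα : α ≤ aC r p S m) (hβ : β ≤ bC r p S m)
    (heven : Even (α + β)) (h2 : 2 ≤ α + β)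
    (hfA : fA ≤ SA r p S (m+1)) (hfB : fB ≤ SB r p S (m+1))
    (htot : α + β + fA + fB = 2 ^ r * p)
    (hEp : α + fA = 0 ∨ 2 ≤ α + fA) :
    HasWZSS (U (2^r * p)) S (2^r * p) := by
  classical
  obtain ⟨gA, hgA1, hgA2, hgA3⟩ := distribute (aC r p S) (Finset.Ico (m+1) (r+1)) fA hfA
  obtain ⟨gB, hgB1, hgB2, hgB3⟩ := distribute (bC r p S) (Finset.Ico (m+1) (r+1)) fB hfB
  have hmmem : m ∈ Finset.range (r+1) := Finset.mem_range.2 (by omega)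
  have hIco_sub : Finset.Ico (m+1) (r+1) ⊆ (Finset.range (r+1)).erase m := by
    intro i hi
    rw [Finset.mem_Ico] at hi
    rw [Finset.mem_erase, Finset.mem_range]
    omega
  have key : ∀ (g : ℕ → ℕ) (c : ℕ), (∀ i, i ∉ Finset.Ico (m+1) (r+1) → g i = 0) →
      ∑ i ∈ Finset.range (r+1), (fun i => if i = m then c else g i) i
        = c + ∑ i ∈ Finset.Ico (m+1) (r+1), g i := by
    intro g c hg0
    rw [← Finset.add_sum_erase _ _ hmmem, if_pos rfl]
    congr 1
    rw [← Finset.sum_subset hIco_sub (fun i hi hni => ?_)]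
    · refine (Finset.sum_congr rfl (fun i hi => ?_)).symm
      rw [Finset.mem_Ico] at hi
      rw [if_neg (by omega)]
    · rw [if_neg (Finset.mem_erase.1 hi).1]
      exact hg0 i hni
  refine build hr hp hp2 S (fun i => if i = m then α else gA i) (fun i => if i = m then β else gB i)
    ?_ ?_ ?_ ?_ ?_
  · intro i
    rcases eq_or_ne i m with rfl | him
    · simpa using hα
    · simpa [him] using hgA1 i
  · intro i
    rcases eq_or_ne i m with rfl | him
    · simpa using hβ
    · simpa [him] using hgB1 i
  · have hA := key gA α hgA2
    have hB := key gB β hgB2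
    rw [Finset.sum_add_distrib, hA, hB, hgA3, hgB3]
    omega
  · intro i hi hz
    rcases lt_trichotomy i m with h | h | h
    · have hne : i ≠ m := by omega
      have hA0 : gA i = 0 := hgA2 i (by simp [Finset.mem_Ico]; omega)
      have hB0 : gB i = 0 := hgB2 i (by simp [Finset.mem_Ico]; omega)
      simp [hne, hA0, hB0]
    · subst h
      simpa using heven
    · exfalso
      have hzm := hz m h
      simp at hzm
      omega
  · rw [key gA α hgA2, hgA3]
    exact hEp

/-- Selection entirely inside class `r`. -/
theorem clB (hr : 2 ≤ r) (hp : p.Prime) (hp2 : p ≠ 2) (S : List (ZMod (2^r * p)))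
    (fA fB : ℕ) (hfA : fA ≤ aC r p S r) (hfB : fB ≤ bC r p S r)
    (htot : fA + fB = 2 ^ r * p) (hEp : fA = 0 ∨ 2 ≤ fA) :
    HasWZSS (U (2^r * p)) S (2^r * p) := by
  classical
  have hrmem : r ∈ Finset.range (r+1) := Finset.mem_range.2 (by omega)
  have key : ∀ c : ℕ, ∑ i ∈ Finset.range (r+1), (fun i => if i = r then c else 0) i = c := by
    intro c
    rw [← Finset.add_sum_erase _ _ hrmem, if_pos rfl, Finset.sum_eq_zero, add_zero]
    intro i hi
    rw [if_neg (Finset.mem_erase.1 hi).1]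
  refine build hr hp hp2 S (fun i => if i = r then fA else 0) (fun i => if i = r then fB else 0)
    ?_ ?_ ?_ ?_ ?_
  · intro i
    rcases eq_or_ne i r with rfl | hir
    · simpa using hfA
    · simp [hir]
  · intro i
    rcases eq_or_ne i r with rfl | hir
    · simpa using hfB
    · simp [hir]
  · rw [Finset.sum_add_distrib, key, key]; exact htot
  · intro i hi _
    have hir : i ≠ r := by omega
    simp [hir]
  · rw [key]; exact hEp

/-- Interval version of `master`: only numeric bounds needed. -/
theorem masterB (hr : 2 ≤ r) (hp : p.Prime) (hp2 : p ≠ 2) (S : List (ZMod (2^r * p)))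
    (m : ℕ) (hm : m < r) (τ : ℕ) (hτe : Even τ) (hτ2 : 2 ≤ τ)
    (hτc : τ ≤ aC r p S m + bC r p S m) (hτn : τ ≤ 2 ^ r * p)
    (hfill : 2 ^ r * p - τ ≤ SA r p S (m+1) + SB r p S (m+1))
    (hgood : ¬((τ - bC r p S m) + ((2 ^ r * p - τ) - SB r p S (m+1)) = 1
        ∧ min τ (aC r p S m) + min (2 ^ r * p - τ) (SA r p S (m+1)) = 1)) :
    HasWZSS (U (2^r * p)) S (2^r * p) := by
  set a := aC r p S m
  set b := bC r p S m
  set sa := SA r p S (m+1)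
  set sb := SB r p S (m+1)
  set f := 2 ^ r * p - τ with hfdef
  set lo := (τ - b) + (f - sb) with hlodef
  set hi := min τ a + min f sa with hhidef
  have hlohi : lo ≤ hi := by omega
  obtain ⟨x, hxlo, hxhi, hxgood⟩ : ∃ x, lo ≤ x ∧ x ≤ hi ∧ (x = 0 ∨ 2 ≤ x) := by
    rcases Nat.eq_zero_or_pos lo with h0 | h1
    · exact ⟨0, by omega, by omega, Or.inl rfl⟩
    · rcases Nat.lt_or_ge lo 2 with h2 | h2
      · refine ⟨2, by omega, by omega, Or.inr le_rfl⟩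
      · exact ⟨lo, le_rfl, hlohi, Or.inr h2⟩
  obtain ⟨α, hα1, hα2, hα3, hα4, hα5, hα6, hα7⟩ :
      ∃ α, α ≤ x ∧ τ - b ≤ α ∧ α ≤ τ ∧ α ≤ a ∧ f - sb ≤ x - α ∧ x - α ≤ f ∧ x - α ≤ sa :=
    ⟨min (min τ a) (max (τ - b) (x - min f sa)),
      by omega, by omega, by omega, by omega, by omega, by omega, by omega⟩
  refine master hr hp hp2 S m hm α (τ - α) (x - α) (f - (x - α)) hα4 (by omega) ?_ (by omega)
    (by omega) (by omega) (by omega) ?_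
  · have hsum : α + (τ - α) = τ := by omega
    rw [hsum]; exact hτe
  · rcases hxgood with h | h
    · left; omega
    · right; omega

end P6

section P7
variable {r p : ℕ}

theorem count_split (S : List (ZMod (2^r * p))) (m : ℕ) (hm : m ≤ r) :
    (∑ i ∈ Finset.Ico 0 m, (aC r p S i + bC r p S i)) + (aC r p S m + bC r p S m)
      + (SA r p S (m+1) + SB r p S (m+1)) = S.length := by
  have h1 := total_counts (r := r) (p := p) S
  rw [Finset.range_eq_Ico] at h1
  rw [← Finset.sum_Ico_consecutive _ (Nat.zero_le m) (by omega : m ≤ r+1)] at h1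
  rw [Finset.sum_eq_sum_Ico_succ_bot (by omega : m < r+1)] at h1
  have h2 : SA r p S (m+1) + SB r p S (m+1)
      = ∑ i ∈ Finset.Ico (m+1) (r+1), (aC r p S i + bC r p S i) := by
    rw [SA, SB, ← Finset.sum_add_distrib]
  omega

theorem SA_split (S : List (ZMod (2^r * p))) {m k : ℕ} (hmk : m ≤ k) (hk : k ≤ r) :
    SA r p S (m+1) = (∑ i ∈ Finset.Ico (m+1) (k+1), aC r p S i) + SA r p S (k+1) := by
  rw [SA, SA, Finset.sum_Ico_consecutive _ (by omega : m+1 ≤ k+1) (by omega : k+1 ≤ r+1)]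

theorem SB_split (S : List (ZMod (2^r * p))) {m k : ℕ} (hmk : m ≤ k) (hk : k ≤ r) :
    SB r p S (m+1) = (∑ i ∈ Finset.Ico (m+1) (k+1), bC r p S i) + SB r p S (k+1) := by
  rw [SB, SB, Finset.sum_Ico_consecutive _ (by omega : m+1 ≤ k+1) (by omega : k+1 ≤ r+1)]

theorem SB_last (S : List (ZMod (2^r * p))) {m : ℕ} (hm : m < r) :
    SB r p S (m+1) = (∑ i ∈ Finset.Ico (m+1) r, bC r p S i) + bC r p S r := by
  rw [SB, Finset.sum_Ico_succ_top (by omega : m+1 ≤ r)]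

theorem SA_last (S : List (ZMod (2^r * p))) {m : ℕ} (hm : m < r) :
    SA r p S (m+1) = (∑ i ∈ Finset.Ico (m+1) r, aC r p S i) + aC r p S r := by
  rw [SA, Finset.sum_Ico_succ_top (by omega : m+1 ≤ r)]

theorem nge12 (hr : 2 ≤ r) (hp : p.Prime) (hp2 : p ≠ 2) : 12 ≤ 2^r * p := by
  have h4 : 4 ≤ 2^r := by
    calc (4:ℕ) = 2^2 := by norm_num
    _ ≤ 2^r := Nat.pow_le_pow_right (by norm_num) hr
  have h3 : 3 ≤ p := by
    have := hp.two_le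
    omega
  calc (12:ℕ) = 4 * 3 := by norm_num
  _ ≤ 2^r * p := Nat.mul_le_mul h4 h3

theorem find_least {P : ℕ → Prop} (h : ∃ i, P i) : ∃ m, P m ∧ ∀ j < m, ¬ P j :=
  ⟨Nat.find h, Nat.find_spec h, fun j hj => Nat.find_min h hj⟩

theorem neven (hr : 2 ≤ r) : (2^r * p) % 2 = 0 := by
  have h2r : (2:ℕ)^r * p = 2 * (2^(r-1) * p) := by
    rw [← mul_assoc, ← pow_succ']
    congr 2
    omega
  omega

/-- The upper bound: every sequence of length `n + r + 1` has a full-length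
weighted zero-sum subsequence. -/
theorem upper (hr : 2 ≤ r) (hp : p.Prime) (hp2 : p ≠ 2) (S : List (ZMod (2^r * p)))
    (hlen : S.length = 2^r * p + r + 1) :
    HasWZSS (U (2^r * p)) S (2^r * p) := by
  classical
  have hn12 := nge12 hr hp hp2
  have hnev := neven (p := p) hr
  by_cases hm : ∃ i, i < r ∧ 2 ≤ aC r p S i + bC r p S i
  case neg =>
    -- all classes below r are small, class r is huge
    push_neg at hm
    have hEr := count_split S r le_rfl
    have hSlt : ∑ i ∈ Finset.Ico 0 r, (aC r p S i + bC r p S i) ≤ r :=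
      sum_le_of_all_le_one (fun i h0 hir => by have := hm i hir; omega)
    have hSA0 : SA r p S (r+1) = 0 := by rw [SA]; simp
    have hSB0 : SB r p S (r+1) = 0 := by rw [SB]; simp
    have hcr : 2^r * p + 1 ≤ aC r p S r + bC r p S r := by omega
    rcases Nat.lt_or_ge (bC r p S r) (2^r * p) with hb | hb
    · refine clB hr hp hp2 S (max 2 (2^r * p - bC r p S r))
        (2^r * p - max 2 (2^r * p - bC r p S r)) (by omega) (by omega) (by omega)
        (Or.inr (by omega))
    · exact clB hr hp hp2 S 0 (2^r * p) (by omega) (by omega) (by omega) (Or.inl rfl)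
  case pos =>
    obtain ⟨m, ⟨hmr, hcm⟩, hmin'⟩ := find_least hm
    have hmin : ∀ j < m, aC r p S j + bC r p S j ≤ 1 := by
      intro j hj
      have h1 := hmin' j hj
      push_neg at h1
      rcases Nat.lt_or_ge j r with h | h
      · have := h1 h; omega
      · omega
    have hE1 := count_split S m (by omega)
    have hSlt : ∑ i ∈ Finset.Ico 0 m, (aC r p S i + bC r p S i) ≤ m :=
      sum_le_of_all_le_one (fun i h0 him => hmin i him)
    set cm := aC r p S m + bC r p S m with hcmdef
    set τ := min (2 * (cm / 2)) (2^r * p) with hτdef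
    have hτe : Even τ := by
      rw [Nat.even_iff]
      omega
    have hτ2 : 2 ≤ τ := by omega
    have hτc : τ ≤ cm := by omega
    have hτn : τ ≤ 2^r * p := by omega
    have hfill : 2^r * p - τ ≤ SA r p S (m+1) + SB r p S (m+1) := by omega
    have hτev2 : τ % 2 = 0 := Nat.even_iff.1 hτe
    by_cases hgood : ((τ - bC r p S m) + ((2^r * p - τ) - SB r p S (m+1)) = 1
        ∧ min τ (aC r p S m) + min (2^r * p - τ) (SA r p S (m+1)) = 1)
    case neg => exact masterB hr hp hp2 S m hmr τ hτe hτ2 hτc hτn hfill hgood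
    obtain ⟨hlo1, hhi1⟩ := hgood
    by_cases hf0 : τ = 2^r * p
    · -- class m has all but r+1-ish elements; retry with τ' = n - 2
      refine masterB hr hp hp2 S m hmr (2^r * p - 2) (Nat.even_iff.2 (by omega)) (by omega)
        (by omega) (by omega) (by omega) ?_
      rintro ⟨h1, h2⟩
      omega
    · -- here τ = 2 * (cm / 2) < n and the fill f is even and ≥ 2
      have hf2 : 2 ≤ 2^r * p - τ := by omega
      by_cases hAm : aC r p S m = 0
      · -- impossible by counting
        exfalso
        omega
      · have hAm1 : aC r p S m = 1 := by omega
        have hSA0 : SA r p S (m+1) = 0 := by omega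
        have hbm : bC r p S m = τ - 1 := by omega
        by_cases hτ4 : 4 ≤ τ
        · refine masterB hr hp hp2 S m hmr (τ - 2) (Nat.even_iff.2 (by omega)) (by omega)
            (by omega) (by omega) (by omega) ?_
          rintro ⟨h1, h2⟩
          omega
        · have hτ2eq : τ = 2 := by omega
          by_cases hb2 : ∃ i, m < i ∧ i < r ∧ 2 ≤ bC r p S i
          · obtain ⟨i₂, ⟨hi2m, hi2r, hi2b⟩, hi2min'⟩ := find_least hb2
            have hi2min : ∀ j, m < j → j < i₂ → bC r p S j ≤ 1 := by
              intro j hj1 hj2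
              have h1 := hi2min' j hj2
              push_neg at h1
              have := h1 hj1 (by omega)
              omega
            have hA_all0 : ∀ j ∈ Finset.Ico (m+1) (r+1), aC r p S j = 0 := by
              refine sum_eq_zero_all ?_
              rw [← SA]
              exact hSA0
            have hSAsplit := SA_split S (show m ≤ i₂ by omega) (by omega : i₂ ≤ r)
            have hSA2 : SA r p S (i₂+1) = 0 := by omega
            have hai2 : aC r p S i₂ = 0 :=
              hA_all0 i₂ (Finset.mem_Ico.2 ⟨by omega, by omega⟩)
            have hSBsplit := SB_split S (show m ≤ i₂ by omega) (by omega : i₂ ≤ r)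
            have hsum_b : ∑ i ∈ Finset.Ico (m+1) (i₂+1), bC r p S i
                = (∑ i ∈ Finset.Ico (m+1) i₂, bC r p S i) + bC r p S i₂ :=
              Finset.sum_Ico_succ_top (by omega) _
            have hsmall : ∑ i ∈ Finset.Ico (m+1) i₂, bC r p S i ≤ i₂ - (m+1) :=
              sum_le_of_all_le_one (fun j hj1 hj2 => hi2min j (by omega) hj2)
            refine masterB hr hp hp2 S i₂ hi2r (min (2 * (bC r p S i₂ / 2)) (2^r * p))
              (Nat.even_iff.2 (by omega)) (by omega) (by omega) (by omega) (by omega) ?_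
            rintro ⟨h1, h2⟩
            omega
          · push_neg at hb2
            have hSBlast := SB_last S hmr
            have hsmall : ∑ i ∈ Finset.Ico (m+1) r, bC r p S i ≤ r - (m+1) :=
              sum_le_of_all_le_one (fun j hj1 hj2 => by have := hb2 j (by omega) hj2; omega)
            refine clB hr hp hp2 S 0 (2^r * p) (by omega) (by omega) (by omega) (Or.inl rfl)

end P7

section P8
variable {r p : ℕ}

/-- the extremal example : n-1 zeros followed by 1, 2, 4, ..., 2^r -/
noncomputable def exX (r p : ℕ) : List (ZMod (2^r * p)) :=
  List.replicate (2^r * p - 1) 0 ++ (List.range (r+1)).map (fun i => (2 : ZMod (2^r * p))^i)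

theorem exX_len (hp : p.Prime) : (exX r p).length = 2^r * p + r := by
  have := hp.pos
  have : 1 ≤ 2^r * p := Nat.one_le_iff_ne_zero.2 (NeZeroN hp)
  simp [exX]
  omega

theorem pow_cast_eq (m : ℕ) (i : ℕ) : (2 : ZMod m)^i = ((2^i : ℕ) : ZMod m) := by
  push_cast
  rfl

theorem pow2_ne_zero_mod2 {i k : ℕ} (hik : i < k) : ((2:ZMod (2^k)))^i ≠ 0 := by
  haveI : NeZero (2^k) := ⟨pow_ne_zero _ two_ne_zero⟩
  rw [pow_cast_eq]
  rw [Ne, ZMod.natCast_eq_zero_iff]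
  intro h
  have := Nat.le_of_dvd ((pow_pos (by norm_num : (0:ℕ) < 2) i)) h
  have := Nat.pow_lt_pow_right (a := 2) (by norm_num) hik
  omega

theorem pow2_ne {i j : ℕ} (hij : i < j) (hjr : j ≤ r) (hp : p.Prime) :
    (2 : ZMod (2^r * p))^i ≠ (2 : ZMod (2^r * p))^j := by
  intro h
  -- map to ZMod (2^(i+1))
  have hdvd : (2:ℕ)^(i+1) ∣ 2^r * p := Dvd.dvd.mul_right (pow_dvd_pow 2 (by omega)) p
  have hcast := congrArg (ZMod.castHom hdvd (ZMod (2^(i+1)))) h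
  rw [map_pow, map_pow, map_ofNat] at hcast
  have h2j : ((2:ZMod (2^(i+1))))^j = 0 := by
    rw [pow_cast_eq]
    rw [ZMod.natCast_eq_zero_iff]
    exact pow_dvd_pow 2 (by omega)
  rw [h2j] at hcast
  exact pow2_ne_zero_mod2 (by omega : i < i + 1) hcast

theorem pow2_ne_zero (hp : p.Prime) (hp2 : p ≠ 2) {i : ℕ} (hir : i ≤ r) :
    (2 : ZMod (2^r * p))^i ≠ 0 := by
  haveI : Fact p.Prime := ⟨hp⟩
  intro h
  rcases Nat.lt_or_ge i r with hlt | hge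
  · have hcast := congrArg (f2 r p) h
    rw [map_pow, map_ofNat, map_zero] at hcast
    exact pow2_ne_zero_mod2 hlt hcast
  · have hcast := congrArg (fp r p) h
    rw [map_pow, map_ofNat, map_zero] at hcast
    exact pow_ne_zero _ (two_ne_zero_modp hp hp2) hcast

theorem mem_exX (hp : p.Prime) {x : ZMod (2^r * p)} (hx : x ∈ exX r p) :
    x = 0 ∨ ∃ i ≤ r, x = (2 : ZMod (2^r * p))^i := by
  rw [exX, List.mem_append] at hx
  rcases hx with h | h
  · exact Or.inl (List.eq_of_mem_replicate h)
  · obtain ⟨i, hi, rfl⟩ := List.mem_map.1 h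
    exact Or.inr ⟨i, by simpa using Nat.lt_succ_iff.1 (List.mem_range.1 hi), rfl⟩

theorem pcount_range_eq {k N : ℕ} (hk : k < N) :
    pcount (fun i => i = k) (List.range N) = 1 := by
  induction N with
  | zero => omega
  | succ N ih =>
    rw [List.range_succ, pcount_append, pcount_cons, pcount_nil]
    rcases Nat.lt_or_ge k N with h | h
    · rw [ih h, if_neg (by omega)]
    · have hkN : k = N := by omega
      subst hkN
      rw [if_pos rfl]
      have : pcount (fun i => i = k) (List.range k) = 0 := by
        rw [pcount_eq_zero]
        intro x hx
        have := List.mem_range.1 hx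
        omega
      rw [this]

theorem pcount_value_exX (hp : p.Prime) (hp2 : p ≠ 2) {j : ℕ} (hj : j ≤ r) :
    pcount (fun x => x = (2 : ZMod (2^r * p))^j) (exX r p) = 1 := by
  rw [exX, pcount_append]
  have h1 : pcount (fun x => x = (2 : ZMod (2^r * p))^j)
      (List.replicate (2^r * p - 1) (0 : ZMod (2^r * p))) = 0 := by
    rw [pcount_eq_zero]
    intro x hx
    rw [List.eq_of_mem_replicate hx]
    exact fun h => pow2_ne_zero hp hp2 hj h.symm
  have h2 : pcount (fun x => x = (2 : ZMod (2^r * p))^j)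
      ((List.range (r+1)).map (fun i => (2 : ZMod (2^r * p))^i)) = 1 := by
    rw [pcount_map]
    have : pcount (fun i => (2 : ZMod (2^r * p))^i = 2^j) (List.range (r+1))
        = pcount (fun i => i = j) (List.range (r+1)) := by
      refine pcount_congr (fun i hi => ?_)
      have hir : i ≤ r := Nat.lt_succ_iff.1 (List.mem_range.1 hi)
      constructor
      · intro h
        by_contra hne
        rcases Nat.lt_or_ge i j with hlt | hgt
        · exact pow2_ne hlt hj hp h
        · exact pow2_ne (by omega) hir hp h.symm
      · rintro rfl; rfl
    rw [this, pcount_range_eq (by omega)]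
  rw [h1, h2]

/-- the example has no weighted zero-sum subsequence of full length -/
theorem exX_no (hr : 2 ≤ r) (hp : p.Prime) (hp2 : p ≠ 2) :
    ¬ HasWZSS (U (2^r * p)) (exX r p) (2^r * p) := by
  haveI : Fact p.Prime := ⟨hp⟩
  rintro ⟨hpos, T, hsub, hlen, w, hwlen, hwU, hsum⟩
  have hmemT : ∀ x ∈ T, x = 0 ∨ ∃ i ≤ r, x = (2 : ZMod (2^r * p))^i :=
    fun x hx => mem_exX hp (hsub.subset hx)
  -- T contains a nonzero element
  have hnz : ∃ x ∈ T, x ≠ 0 := by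
    by_contra hall
    push_neg at hall
    have h1 : pcount (fun x => x = (0 : ZMod (2^r * p))) T = T.length := by
      unfold pcount
      rw [List.countP_eq_length]
      intro x hx
      simpa using hall x hx
    have h2 : pcount (fun x => x = (0 : ZMod (2^r * p))) (exX r p) = 2^r * p - 1 := by
      rw [exX, pcount_append]
      have ha : pcount (fun x => x = (0:ZMod (2^r * p)))
          (List.replicate (2^r * p - 1) (0 : ZMod (2^r * p))) = 2^r * p - 1 := by
        have hl : (List.replicate (2^r * p - 1) (0:ZMod (2^r * p))).length = 2^r * p - 1 := by
          simp
        unfold pcount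
        conv_rhs => rw [← hl]
        rw [List.countP_eq_length]
        intro x hx
        simp [List.eq_of_mem_replicate hx]
      have hb : pcount (fun x => x = (0:ZMod (2^r * p)))
          ((List.range (r+1)).map (fun i => (2 : ZMod (2^r * p))^i)) = 0 := by
        rw [pcount_eq_zero]
        intro x hx
        obtain ⟨i, hi, rfl⟩ := List.mem_map.1 hx
        exact pow2_ne_zero hp hp2 (Nat.lt_succ_iff.1 (List.mem_range.1 hi))
      rw [ha, hb]
      omega
    have hle := pcount_sublist (fun x => x = (0 : ZMod (2^r * p))) hsub
    rw [h1, h2, hlen] at hle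
    have := nge12 hr hp hp2
    omega
  -- single-contributor argument through a ring hom
  have key : ∀ {M : ℕ} (g : ZMod (2^r * p) →+* ZMod M), NeZero M →
      pcount (fun x => g x ≠ 0) T = 1 → False := by
    intro M g hM hcnt
    have hmap := congrArg g hsum
    rw [map_zero, hom_zip_sum] at hmap
    refine single_nonzero_sum (w.map g) (T.map g) ?_ (by simp [hwlen]) ?_ hmap
    · intro u hu
      obtain ⟨v, hv, rfl⟩ := List.mem_map.1 hu
      exact (hwU v hv).map g
    · rw [pcount_map]
      exact hcnt
  by_cases hlow : ∃ i, i < r ∧ (2 : ZMod (2^r * p))^i ∈ T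
  · obtain ⟨m, ⟨hmr, hmT⟩, hmmin⟩ := find_least hlow
    have hdvd : (2:ℕ)^(m+1) ∣ 2^r * p := Dvd.dvd.mul_right (pow_dvd_pow 2 (by omega)) p
    set g := ZMod.castHom hdvd (ZMod (2^(m+1))) with hgdef
    refine key g ⟨pow_ne_zero _ two_ne_zero⟩ ?_
    have hcongr : pcount (fun x => g x ≠ 0) T
        = pcount (fun x => x = (2 : ZMod (2^r * p))^m) T := by
      refine pcount_congr (fun x hx => ?_)
      rcases hmemT x hx with rfl | ⟨i, hir, rfl⟩
      · simp
        exact fun h => pow2_ne_zero hp hp2 (by omega : m ≤ r) h.symm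
      · have hgi : g ((2 : ZMod (2^r * p))^i) = (2 : ZMod (2^(m+1)))^i := by
          rw [map_pow, map_ofNat]
        constructor
        · intro h
          rw [hgi] at h
          rcases Nat.lt_or_ge i (m+1) with him | him
          · rcases Nat.lt_or_ge i m with hlt | hge
            · exact absurd (hmmin i hlt ⟨by omega, hx⟩) (fun hc => hc)
            · have : i = m := by omega
              rw [this]
          · exfalso
            apply h
            rw [pow_cast_eq, ZMod.natCast_eq_zero_iff]
            exact pow_dvd_pow 2 him
        · intro h
          have him : i = m := by
            by_contra hne
            rcases Nat.lt_or_ge i m with hlt | hgt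
            · exact pow2_ne hlt (by omega) hp h
            · exact pow2_ne (by omega : m < i) hir hp h.symm
          subst him
          rw [hgi]
          exact pow2_ne_zero_mod2 (by omega)
    rw [hcongr]
    have hle : pcount (fun x => x = (2 : ZMod (2^r * p))^m) T ≤ 1 := by
      have := pcount_sublist (fun x => x = (2 : ZMod (2^r * p))^m) hsub
      rw [pcount_value_exX hp hp2 (by omega : m ≤ r)] at this
      exact this
    have hge : 1 ≤ pcount (fun x => x = (2 : ZMod (2^r * p))^m) T :=
      pcount_pos.2 ⟨_, hmT, rfl⟩
    omega
  · -- no low powers: T ⊆ {0, 2^r}, use the mod-p component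
    push_neg at hlow
    refine key (fp r p) ⟨hp.ne_zero⟩ ?_
    have hcongr : pcount (fun x => fp r p x ≠ 0) T
        = pcount (fun x => x = (2 : ZMod (2^r * p))^r) T := by
      refine pcount_congr (fun x hx => ?_)
      rcases hmemT x hx with rfl | ⟨i, hir, rfl⟩
      · simp
        exact fun h => pow2_ne_zero hp hp2 le_rfl h.symm
      · have hieq : i = r := by
          by_contra hne
          exact hlow i (by omega) hx
        subst hieq
        constructor
        · intro _; rfl
        · intro _
          rw [map_pow, map_ofNat]
          exact pow_ne_zero _ (two_ne_zero_modp hp hp2)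
    rw [hcongr]
    have hle : pcount (fun x => x = (2 : ZMod (2^r * p))^r) T ≤ 1 := by
      have := pcount_sublist (fun x => x = (2 : ZMod (2^r * p))^r) hsub
      rw [pcount_value_exX hp hp2 le_rfl] at this
      exact this
    obtain ⟨x, hxT, hxne⟩ := hnz
    have hxval : x = (2 : ZMod (2^r * p))^r := by
      rcases hmemT x hxT with rfl | ⟨i, hir, rfl⟩
      · exact absurd rfl hxne
      · have : i = r := by
          by_contra hne
          exact hlow i (by omega) hxT
        rw [this]
    have hge : 1 ≤ pcount (fun x => x = (2 : ZMod (2^r * p))^r) T :=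
      pcount_pos.2 ⟨x, hxT, hxval⟩
    omega

end P8

section P9
variable {r p : ℕ}

theorem HasWZSS_mono {n : ℕ} {A : Set (ZMod n)} {S S' : List (ZMod n)} {t : ℕ}
    (hsub : S.Sublist S') (h : HasWZSS A S t) : HasWZSS A S' t := by
  obtain ⟨hpos, T, hT, hlen, hsum⟩ := h
  exact ⟨hpos, T, hT.trans hsub, hlen, hsum⟩

theorem gaoC_eq (hr : 2 ≤ r) (hp : p.Prime) (hp2 : p ≠ 2) :
    GaoC (2^r * p) (U (2^r * p)) = 2^r * p + r + 1 := by
  set K := {k | 0 < k ∧ ∀ S : List (ZMod (2^r * p)), S.length = k →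
    HasWZSS (U (2^r * p)) S (2^r * p)} with hK
  have hmem : 2^r * p + r + 1 ∈ K := by
    constructor
    · omega
    · intro S hS
      exact upper hr hp hp2 S hS
  have hup : GaoC (2^r * p) (U (2^r * p)) ≤ 2^r * p + r + 1 := Nat.sInf_le hmem
  have hlow : 2^r * p + r + 1 ≤ GaoC (2^r * p) (U (2^r * p)) := by
    by_contra hc
    push_neg at hc
    have hKmem : GaoC (2^r * p) (U (2^r * p)) ∈ K := Nat.sInf_mem ⟨_, hmem⟩
    obtain ⟨hpos, hall⟩ := hKmem
    set k := GaoC (2^r * p) (U (2^r * p))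
    have hk : k ≤ 2^r * p + r := by omega
    have hlen : ((exX r p).take k).length = k := by
      rw [List.length_take, exX_len hp]
      omega
    have := hall ((exX r p).take k) hlen
    exact exX_no hr hp hp2 (HasWZSS_mono (List.take_sublist _ _) this)
  omega

theorem extremal_len (hr : 2 ≤ r) (hp : p.Prime) (hp2 : p ≠ 2)
    {S : List (ZMod (2^r * p))} (hS : S.length = GaoC (2^r * p) (U (2^r * p)) - 1) :
    S.length = 2^r * p + r := by
  rw [hS, gaoC_eq hr hp hp2]
  omega

end P9

section P10
variable {r p : ℕ}

theorem sum_le_pred {c : ℕ → ℕ} {lo hi i₀ : ℕ} (h : ∀ i, lo ≤ i → i < hi → c i ≤ 1)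
    (h0 : lo ≤ i₀) (h1 : i₀ < hi) (hz : c i₀ = 0) :
    (∑ i ∈ Finset.Ico lo hi, c i) + 1 ≤ hi - lo := by
  have hmem : i₀ ∈ Finset.Ico lo hi := Finset.mem_Ico.2 ⟨h0, h1⟩
  have hsplit : ∑ i ∈ Finset.Ico lo hi, c i = ∑ i ∈ (Finset.Ico lo hi).erase i₀, c i := by
    rw [← Finset.add_sum_erase _ _ hmem, hz, zero_add]
  have hb : ∑ i ∈ (Finset.Ico lo hi).erase i₀, c i ≤ ((Finset.Ico lo hi).erase i₀).card := by
    refine (Finset.sum_le_card_nsmul _ _ 1 ?_).trans (by simp)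
    intro j hj
    rw [Finset.mem_erase, Finset.mem_Ico] at hj
    exact h j hj.2.1 hj.2.2
  rw [Finset.card_erase_of_mem hmem, Nat.card_Ico] at hb
  omega

theorem SA_r (S : List (ZMod (2^r * p))) : SA r p S r = aC r p S r := by
  rw [SA, Nat.Ico_succ_singleton, Finset.sum_singleton]

theorem SB_r (S : List (ZMod (2^r * p))) : SB r p S r = bC r p S r := by
  rw [SB, Nat.Ico_succ_singleton, Finset.sum_singleton]

/-- the core structure theorem: if the extremal sequence has a class `m ≤ r-2`
with at least two elements (and it is least such), then it has exactly two and
every other class up to `r-2` is a singleton. -/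
theorem core (hr : 2 ≤ r) (hp : p.Prime) (hp2 : p ≠ 2) (S : List (ZMod (2^r * p)))
    (hlen : S.length = 2^r * p + r)
    (hno : ¬ HasWZSS (U (2^r * p)) S (2^r * p))
    (m : ℕ) (hm2 : m + 2 ≤ r) (hcm : 2 ≤ aC r p S m + bC r p S m)
    (hmin : ∀ j < m, aC r p S j + bC r p S j ≤ 1) :
    (aC r p S m + bC r p S m = 2) ∧
      ∀ i, i + 2 ≤ r → i ≠ m → aC r p S i + bC r p S i = 1 := by
  classical
  have hmr : m < r := by omega
  have hn12 := nge12 hr hp hp2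
  have hnev := neven (p := p) hr
  have hE1 := count_split S m (by omega)
  have hSlt : ∑ i ∈ Finset.Ico 0 m, (aC r p S i + bC r p S i) ≤ m :=
    sum_le_of_all_le_one (fun i h0 him => hmin i him)
  set cm := aC r p S m + bC r p S m with hcmdef
  set τ := min (2 * (cm / 2)) (2^r * p) with hτdef
  have hτe : Even τ := by rw [Nat.even_iff]; omega
  have hτev2 : τ % 2 = 0 := Nat.even_iff.1 hτe
  by_cases hgood : ((τ - bC r p S m) + ((2^r * p - τ) - SB r p S (m+1)) = 1
      ∧ min τ (aC r p S m) + min (2^r * p - τ) (SA r p S (m+1)) = 1)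
  case neg =>
    exact absurd (masterB hr hp hp2 S m hmr τ hτe (by omega) (by omega) (by omega)
      (by omega) hgood) hno
  obtain ⟨hlo1, hhi1⟩ := hgood
  by_cases hf0 : τ = 2^r * p
  · exfalso
    refine hno (masterB hr hp hp2 S m hmr (2^r * p - 2) (Nat.even_iff.2 (by omega)) (by omega)
      (by omega) (by omega) (by omega) ?_)
    rintro ⟨h1, h2⟩
    omega
  have hf2 : 2 ≤ 2^r * p - τ := by omega
  by_cases hAm : aC r p S m = 0
  · exfalso
    omega
  have hAm1 : aC r p S m = 1 := by omega
  have hSA0 : SA r p S (m+1) = 0 := by omega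
  have hbm : bC r p S m = τ - 1 := by omega
  by_cases hτ4 : 4 ≤ τ
  · exfalso
    refine hno (masterB hr hp hp2 S m hmr (τ - 2) (Nat.even_iff.2 (by omega)) (by omega)
      (by omega) (by omega) (by omega) ?_)
    rintro ⟨h1, h2⟩
    omega
  have hτ2eq : τ = 2 := by omega
  have hcm2 : cm = 2 := by omega
  have hA_all0 : ∀ j ∈ Finset.Ico (m+1) (r+1), aC r p S j = 0 := by
    refine sum_eq_zero_all ?_
    rw [← SA]
    exact hSA0
  -- Step 1: no class in (m, r-2] has two elements
  have hB1 : ∀ i, m < i → i + 2 ≤ r → bC r p S i ≤ 1 := by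
    by_contra hb2'
    push_neg at hb2'
    have hb2 : ∃ i, m < i ∧ i + 2 ≤ r ∧ 2 ≤ bC r p S i := by
      obtain ⟨i, h1, h2, h3⟩ := hb2'
      exact ⟨i, h1, h2, h3⟩
    obtain ⟨i₂, ⟨hi2m, hi2r, hi2b⟩, hi2min'⟩ := find_least hb2
    have hi2min : ∀ j, m < j → j < i₂ → bC r p S j ≤ 1 := by
      intro j hj1 hj2
      have h1 := hi2min' j hj2
      push_neg at h1
      have := h1 hj1 (by omega)
      omega
    have hSAsplit := SA_split S (show m ≤ i₂ by omega) (by omega : i₂ ≤ r)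
    have hSA2 : SA r p S (i₂+1) = 0 := by omega
    have hai2 : aC r p S i₂ = 0 := hA_all0 i₂ (Finset.mem_Ico.2 ⟨by omega, by omega⟩)
    have hSBsplit := SB_split S (show m ≤ i₂ by omega) (by omega : i₂ ≤ r)
    have hsum_b : ∑ i ∈ Finset.Ico (m+1) (i₂+1), bC r p S i
        = (∑ i ∈ Finset.Ico (m+1) i₂, bC r p S i) + bC r p S i₂ :=
      Finset.sum_Ico_succ_top (by omega) _
    have hsmall : ∑ i ∈ Finset.Ico (m+1) i₂, bC r p S i ≤ i₂ - (m+1) :=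
      sum_le_of_all_le_one (fun j hj1 hj2 => hi2min j (by omega) hj2)
    refine hno (masterB hr hp hp2 S i₂ (by omega) (min (2 * (bC r p S i₂ / 2)) (2^r * p))
      (Nat.even_iff.2 (by omega)) (by omega) (by omega) (by omega) (by omega) ?_)
    rintro ⟨h1, h2⟩
    omega
  -- Step 2: no class up to r-2 other than m is empty
  have hB0 : ∀ i, i + 2 ≤ r → i ≠ m → 1 ≤ aC r p S i + bC r p S i := by
    by_contra hz'
    push_neg at hz'
    obtain ⟨i₀, hi₀r, hi₀m, hi₀z⟩ := hz'
    have hi₀z' : aC r p S i₀ + bC r p S i₀ = 0 := by omega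
    -- decompose SB' at r-1 and r
    have hidx : r - 1 + 1 = r := by omega
    have hSBsplit := SB_split S (show m ≤ r - 1 by omega) (by omega : r - 1 ≤ r)
    simp only [hidx] at hSBsplit
    rw [SB_r] at hSBsplit
    have hsum_b : ∑ i ∈ Finset.Ico (m+1) r, bC r p S i
        = (∑ i ∈ Finset.Ico (m+1) (r-1), bC r p S i) + bC r p S (r-1) := by
      have h := Finset.sum_Ico_succ_top (show m+1 ≤ r-1 by omega) (bC r p S)
      rw [hidx] at h
      exact h
    have har : aC r p S r = 0 := hA_all0 r (Finset.mem_Ico.2 ⟨by omega, by omega⟩)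
    have har1 : aC r p S (r-1) = 0 :=
      hA_all0 (r-1) (Finset.mem_Ico.2 ⟨by omega, by omega⟩)
    -- the two tail classes carry at least n+1 elements
    have hbig : 2^r * p + 1 ≤ bC r p S (r-1) + bC r p S r := by
      rcases lt_trichotomy i₀ m with hc | hc | hc
      · have hbot : (∑ i ∈ Finset.Ico 0 m, (aC r p S i + bC r p S i)) + 1 ≤ m :=
          sum_le_pred (fun j hj1 hj2 => hmin j hj2) (by omega) (by omega) hi₀z'
        have hmid : ∑ i ∈ Finset.Ico (m+1) (r-1), bC r p S i ≤ (r-1) - (m+1) :=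
          sum_le_of_all_le_one (fun j hj1 hj2 => hB1 j (by omega) (by omega))
        omega
      · exact absurd hc hi₀m
      · have hbz : bC r p S i₀ = 0 := by omega
        have hmid : (∑ i ∈ Finset.Ico (m+1) (r-1), bC r p S i) + 1 ≤ (r-1) - (m+1) :=
          sum_le_pred (fun j hj1 hj2 => hB1 j (by omega) (by omega)) (by omega) (by omega) hbz
        omega
    by_cases hbr1 : 2 ≤ bC r p S (r-1)
    · -- use class r-1 as the minimum
      have hSAr1 : SA r p S (r - 1 + 1) = aC r p S r := by
        simp only [hidx]; exact SA_r S
      have hSBr1 : SB r p S (r - 1 + 1) = bC r p S r := by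
        simp only [hidx]; exact SB_r S
      refine hno (masterB hr hp hp2 S (r-1) (by omega)
        (min (2 * (bC r p S (r-1) / 2)) (2^r * p))
        (Nat.even_iff.2 (by omega)) (by omega) (by omega) (by omega) (by omega) ?_)
      rintro ⟨h1, h2⟩
      omega
    · refine hno (clB hr hp hp2 S 0 (2^r * p) (by omega) (by omega) (by omega) (Or.inl rfl))
  refine ⟨by omega, fun i hi2 him => ?_⟩
  rcases lt_trichotomy i m with h | h | h
  · have h1 := hmin i h
    have h0 := hB0 i hi2 him
    omega
  · exact absurd h him
  · have hA := hA_all0 i (Finset.mem_Ico.2 ⟨by omega, by omega⟩)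
    have h1 := hB1 i h hi2
    have h0 := hB0 i hi2 him
    omega

end P10

section P11
variable {r p : ℕ}

theorem claimA (hr : 2 ≤ r) (hp : p.Prime) (hp2 : p ≠ 2) (S : List (ZMod (2^r * p)))
    (hlen : S.length = 2^r * p + r)
    (hno : ¬ HasWZSS (U (2^r * p)) S (2^r * p))
    (hsmall : ∀ i, i + 2 ≤ r → aC r p S i + bC r p S i ≤ 1)
    (i₀ : ℕ) (hi₀r : i₀ + 2 ≤ r) (hz : aC r p S i₀ + bC r p S i₀ = 0) : False := by
  classical
  have hn12 := nge12 hr hp hp2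
  have hnev := neven (p := p) hr
  have hidx : r - 1 + 1 = r := by omega
  have hE1 := count_split S (r-1) (by omega)
  simp only [hidx] at hE1
  rw [SA_r, SB_r] at hE1
  have hSig : (∑ i ∈ Finset.Ico 0 (r-1), (aC r p S i + bC r p S i)) + 1 ≤ r - 1 :=
    sum_le_pred (fun j hj1 hj2 => hsmall j (by omega)) (by omega) (by omega) hz
  have hSAr1 : SA r p S (r - 1 + 1) = aC r p S r := by
    simp only [hidx]; exact SA_r S
  have hSBr1 : SB r p S (r - 1 + 1) = bC r p S r := by
    simp only [hidx]; exact SB_r S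
  by_cases hc : 2 ≤ aC r p S (r-1) + bC r p S (r-1)
  · set cm := aC r p S (r-1) + bC r p S (r-1) with hcmdef
    set τ := min (2 * (cm / 2)) (2^r * p) with hτdef
    have hτe : Even τ := by rw [Nat.even_iff]; omega
    have hτev2 : τ % 2 = 0 := Nat.even_iff.1 hτe
    by_cases hgood : ((τ - bC r p S (r-1)) + ((2^r * p - τ) - SB r p S ((r-1)+1)) = 1
        ∧ min τ (aC r p S (r-1)) + min (2^r * p - τ) (SA r p S ((r-1)+1)) = 1)
    case neg =>
      exact hno (masterB hr hp hp2 S (r-1) (by omega) τ hτe (by omega) (by omega) (by omega)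
        (by omega) hgood)
    obtain ⟨hlo1, hhi1⟩ := hgood
    by_cases hf0 : τ = 2^r * p
    · refine hno (masterB hr hp hp2 S (r-1) (by omega) (2^r * p - 2)
        (Nat.even_iff.2 (by omega)) (by omega) (by omega) (by omega) (by omega) ?_)
      rintro ⟨h1, h2⟩
      omega
    have hf2 : 2 ≤ 2^r * p - τ := by omega
    by_cases hAm : aC r p S (r-1) = 0
    · omega
    have hAm1 : aC r p S (r-1) = 1 := by omega
    have hSA0 : aC r p S r = 0 := by omega
    have hbm : bC r p S (r-1) = τ - 1 := by omega
    by_cases hτ4 : 4 ≤ τ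
    · refine hno (masterB hr hp hp2 S (r-1) (by omega) (τ - 2)
        (Nat.even_iff.2 (by omega)) (by omega) (by omega) (by omega) (by omega) ?_)
      rintro ⟨h1, h2⟩
      omega
    · exact hno (clB hr hp hp2 S 0 (2^r * p) (by omega) (by omega) (by omega) (Or.inl rfl))
  · rcases Nat.lt_or_ge (bC r p S r) (2^r * p) with hb | hb
    · refine hno (clB hr hp hp2 S (max 2 (2^r * p - bC r p S r))
        (2^r * p - max 2 (2^r * p - bC r p S r)) (by omega) (by omega) (by omega)
        (Or.inr (by omega)))
    · exact hno (clB hr hp hp2 S 0 (2^r * p) (by omega) (by omega) (by omega) (Or.inl rfl))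

theorem pcount_eq_cC (hr : 2 ≤ r) (hp : p.Prime) (hp2 : p ≠ 2) (S : List (ZMod (2^r * p)))
    {i : ℕ} (hir : i < r) :
    pcount (IsOddMultiple (2^r * p) i) S = aC r p S i + bC r p S i := by
  have h1 : pcount (IsOddMultiple (2^r * p) i) S = pcount (fun x => nuN r p x = i) S :=
    pcount_congr (fun x _ => iom_iff (by omega) hp hp2 hir x)
  rw [h1, pcount_split (fun x => nuN r p x = i) (fun x => fp r p x ≠ 0) S]
  unfold aC bC
  congr 1
  exact pcount_congr (fun x _ => by tauto)

theorem dichotomy_main (hr : 2 ≤ r) (hp : p.Prime) (hpodd : p ≠ 2)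
    (S : List (ZMod (2 ^ r * p)))
    (hlen : S.length = 2^r * p + r)
    (hno : ¬ HasWZSS (U (2^r * p)) S (2^r * p)) :
    Xor'
      (∀ i ≤ r - 2, pcount (IsOddMultiple (2 ^ r * p) i) S = 1)
      (∃! j, j ≤ r - 2 ∧ pcount (IsOddMultiple (2 ^ r * p) j) S = 2 ∧
        ∀ i ≤ r - 2, i ≠ j → pcount (IsOddMultiple (2 ^ r * p) i) S = 1) := by
  classical
  have hbridge : ∀ i, i ≤ r - 2 →
      pcount (IsOddMultiple (2^r * p) i) S = aC r p S i + bC r p S i :=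
    fun i hi => pcount_eq_cC hr hp hpodd S (by omega)
  by_cases hbig : ∃ i, i + 2 ≤ r ∧ 2 ≤ aC r p S i + bC r p S i
  · obtain ⟨istar, histar⟩ := hbig
    have hex : ∃ j, 2 ≤ aC r p S j + bC r p S j := ⟨istar, histar.2⟩
    obtain ⟨m, hcm, hmin'⟩ := find_least hex
    have hmle : m ≤ istar := by
      by_contra hmgt
      push_neg at hmgt
      exact (hmin' istar hmgt) histar.2
    have hm2 : m + 2 ≤ r := by omega
    have hminle : ∀ j < m, aC r p S j + bC r p S j ≤ 1 := by
      intro j hj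
      have := hmin' j hj
      omega
    obtain ⟨hcm2, hforce⟩ := core hr hp hpodd S hlen hno m hm2 hcm hminle
    refine Or.inr ⟨⟨m, ⟨by omega, ?_, ?_⟩, ?_⟩, ?_⟩
    · rw [hbridge m (by omega)]
      exact hcm2
    · intro i hi hne
      rw [hbridge i hi]
      exact hforce i (by omega) hne
    · rintro j ⟨hj1, hj2, -⟩
      by_contra hne
      rw [hbridge j hj1] at hj2
      have := hforce j (by omega) hne
      omega
    · intro hall
      have := hall m (by omega)
      rw [hbridge m (by omega)] at this
      omega
  · push_neg at hbig
    have hall1 : ∀ i, i ≤ r - 2 → aC r p S i + bC r p S i = 1 := by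
      intro i hi
      rcases Nat.eq_zero_or_pos (aC r p S i + bC r p S i) with h0 | h1
      · exact (claimA hr hp hpodd S hlen hno
          (fun j hj => by have := hbig j hj; omega) i (by omega) h0).elim
      · have := hbig i (by omega)
        omega
    refine Or.inl ⟨fun i hi => ?_, ?_⟩
    · rw [hbridge i hi]
      exact hall1 i hi
    · rintro ⟨j, ⟨hj1, hj2, -⟩, -⟩
      rw [hbridge j hj1] at hj2
      have := hall1 j hj1
      omega

end P11

/-- For `n = 2 ^ r * p`, `p` an odd prime, `r ≥ 2`: if `S` is a `U(n)`-extremal sequence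
for the Gao constant, then exactly one of the following holds: (i) for each
`0 ≤ i ≤ r - 2` an odd multiple of `2 ^ i` occurs exactly once in `S`; or (ii) there is a
unique `j` with `0 ≤ j ≤ r - 2` such that odd multiples of `2 ^ j` occur exactly twice in
`S`, while for each other `0 ≤ i ≤ r - 2` an odd multiple of `2 ^ i` occurs exactly once. -/
theorem odd_multiple_count_dichotomy (r p : ℕ) (hr : 2 ≤ r) (hp : p.Prime) (hpodd : p ≠ 2)
    (S : List (ZMod (2 ^ r * p)))
    (hS : IsGaoExtremal (2 ^ r * p) (U (2 ^ r * p)) S) :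
    Xor'
      (∀ i ≤ r - 2, pcount (IsOddMultiple (2 ^ r * p) i) S = 1)
      (∃! j, j ≤ r - 2 ∧ pcount (IsOddMultiple (2 ^ r * p) j) S = 2 ∧
        ∀ i ≤ r - 2, i ≠ j → pcount (IsOddMultiple (2 ^ r * p) i) S = 1) := by
  have hlen := extremal_len hr hp hpodd hS.1
  exact dichotomy_main hr hp hpodd S hlen hS.2
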